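/- arXiv:1608.06851 — 5 statements merged into one kernel-verified Lean document; each statement's English description precedes it below -/
import Mathlib

section
/- Let (Ω, F, (Fₙ), P) be a filtered probability space and for each n let P̄ₙ and P̄*ₙ be probability measures on Fₙ with densities f̄ₙ and f̄*ₙ respectively with respect to a common σ-finite measure ν̄ₙ, where P̄*ₙ = P restricted to Fₙ. Let F̃ₙ ⊆ Fₙ be sub-σ-fields and let f̃ₙ, f̃*ₙ be the densities of the F̃ₙ-restrictions of P̄ₙ and P̄*ₙ with respect to the F̃ₙ-restriction of ν̄ₙ. Then P-almost surely, n⁻¹ log(f̃ₙ/f̃*ₙ) ≥ n⁻¹ log(f̄ₙ/f̄*ₙ) + εₙ where εₙ → 0 P-a.s. In particular, P-almost surely, the event { f̄ₙ/f̄*ₙ > n² · f̃ₙ/f̃*ₙ } occurs for only finitely many n. -/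
open MeasureTheory Filter
open scoped ENNReal
open scoped NNReal

/-- In a filtered probability space `(Ω, F, (Fₙ), P)`, let `P̄ₙ = ν̄ₙ.withDensity f̄ₙ`
be probability measures and `f̄*ₙ` the density of `P` restricted to `Fₙ` w.r.t. the σ-finite measure
`ν̄ₙ` on `Fₙ`; let `F̃ₙ ⊆ Fₙ` be sub-σ-fields and `f̃ₙ, f̃*ₙ` the densities of the `F̃ₙ`-restrictions.
Then `P`-a.s., `n⁻¹ log(f̃ₙ/f̃*ₙ) ≥ n⁻¹ log(f̄ₙ/f̄*ₙ) + εₙ` with `εₙ → 0` `P`-a.s.; in particular,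
`P`-a.s. the event `{ f̄ₙ/f̄*ₙ > n² · f̃ₙ/f̃*ₙ }` occurs for only finitely many `n`. -/
theorem image_density_lemma {Ω : Type*} {mΩ : MeasurableSpace Ω}
    (P : Measure Ω) [IsProbabilityMeasure P]
    (F Ft : ℕ → MeasurableSpace Ω) (hFmono : Monotone F)
    (hF : ∀ n, F n ≤ mΩ) (hFt : ∀ n, Ft n ≤ F n)
    (ν : (n : ℕ) → @Measure Ω (F n)) (hν : ∀ n, SigmaFinite (ν n))
    (fb fbs ftl ftls : ℕ → Ω → ℝ≥0∞)
    (hfb : ∀ n, Measurable[F n] (fb n)) (hfbs : ∀ n, Measurable[F n] (fbs n))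
    (hftl : ∀ n, Measurable[Ft n] (ftl n)) (hftls : ∀ n, Measurable[Ft n] (ftls n))
    (hprob : ∀ n, IsProbabilityMeasure ((ν n).withDensity (fb n)))
    (hPstar : ∀ n, P.trim (hF n) = (ν n).withDensity (fbs n))
    (hrt : ∀ n, ((ν n).withDensity (fb n)).trim (hFt n) = ((ν n).trim (hFt n)).withDensity (ftl n))
    (hrts : ∀ n, ((ν n).withDensity (fbs n)).trim (hFt n)
      = ((ν n).trim (hFt n)).withDensity (ftls n)) :
    (∃ ε : ℕ → Ω → ℝ,
      (∀ᵐ ω ∂P, Tendsto (fun n => ε n ω) atTop (nhds 0)) ∧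
      (∀ᵐ ω ∂P, ∀ n : ℕ, 1 ≤ n →
        (((n : ℝ)⁻¹ : ℝ) : EReal) * ENNReal.log (fb n ω / fbs n ω) + (ε n ω : EReal)
          ≤ (((n : ℝ)⁻¹ : ℝ) : EReal) * ENNReal.log (ftl n ω / ftls n ω))) ∧
    (∀ᵐ ω ∂P, ∀ᶠ n : ℕ in atTop,
      fb n ω / fbs n ω ≤ (n : ℝ≥0∞) ^ 2 * (ftl n ω / ftls n ω)) := by
  classical
  have hFtF : ∀ n, Ft n ≤ mΩ := fun n => (hFt n).trans (hF n)
  have hPt : ∀ n, P.trim (hFtF n) = ((ν n).trim (hFt n)).withDensity (ftls n) := by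
    intro n
    rw [← trim_trim (hm₁₂ := hFt n) (hm₂ := hF n), hPstar n, hrts n]
  -- change of measure
  have hA : ∀ n (g : Ω → ℝ≥0∞), Measurable[F n] g →
      ∫⁻ ω, g ω ∂P = ∫⁻ ω, fbs n ω * g ω ∂(ν n) := by
    intro n g hg
    rw [← lintegral_trim (hF n) hg, hPstar n]
    exact lintegral_withDensity_eq_lintegral_mul (ν n) (hfbs n) hg
  have hC : ∀ n (g : Ω → ℝ≥0∞), Measurable[Ft n] g →
      ∫⁻ ω, g ω ∂((ν n).withDensity (fb n))
        = ∫⁻ ω, ftl n ω * g ω ∂((ν n).trim (hFt n)) := by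
    intro n g hg
    rw [← lintegral_trim (hFt n) hg, hrt n]
    exact lintegral_withDensity_eq_lintegral_mul _ (hftl n) hg
  -- total masses
  have hfbs_int : ∀ n, ∫⁻ ω, fbs n ω ∂(ν n) = 1 := by
    intro n
    have h1 : ((ν n).withDensity (fbs n)) Set.univ = 1 := by
      rw [← hPstar n, trim_measurableSet_eq (hF n) MeasurableSet.univ]
      exact measure_univ
    rwa [withDensity_apply _ MeasurableSet.univ, Measure.restrict_univ] at h1
  have hftls_int : ∀ n, ∫⁻ ω, ftls n ω ∂((ν n).trim (hFt n)) = 1 := by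
    intro n
    have h1 : (((ν n).trim (hFt n)).withDensity (ftls n)) Set.univ = 1 := by
      rw [← hPt n, trim_measurableSet_eq (hFtF n) MeasurableSet.univ]
      exact measure_univ
    rwa [withDensity_apply _ MeasurableSet.univ, Measure.restrict_univ] at h1
  have hfb_int : ∀ n, ∫⁻ ω, fb n ω ∂(ν n) = 1 := by
    intro n
    have h1 : ((ν n).withDensity (fb n)) Set.univ = 1 := measure_univ
    rwa [withDensity_apply _ MeasurableSet.univ, Measure.restrict_univ] at h1
  have hftl_int : ∀ n, ∫⁻ ω, ftl n ω ∂((ν n).trim (hFt n)) = 1 := by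
    intro n
    have h1 : (((ν n).trim (hFt n)).withDensity (ftl n)) Set.univ = 1 := by
      rw [← hrt n, trim_measurableSet_eq (hFt n) MeasurableSet.univ]
      exact measure_univ
    rwa [withDensity_apply _ MeasurableSet.univ, Measure.restrict_univ] at h1
  -- null sets: P-a.e. conditions
  -- a generic tool: if s is F n-null (w.r.t. ν) then P-null, etc.
  have hnull : ∀ n (s : Set Ω), MeasurableSet[F n] s → (∫⁻ ω in s, fbs n ω ∂(ν n)) = 0 →
      P s = 0 := by
    intro n s hs h0
    rw [← trim_measurableSet_eq (hF n) hs, hPstar n, withDensity_apply _ hs, h0]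
  have hnullt : ∀ n (s : Set Ω), MeasurableSet[Ft n] s →
      (∫⁻ ω in s, ftls n ω ∂((ν n).trim (hFt n))) = 0 → P s = 0 := by
    intro n s hs h0
    rw [← trim_measurableSet_eq (hFtF n) hs, hPt n, withDensity_apply _ hs, h0]
  have hfbs0 : ∀ n, ∀ᵐ ω ∂P, fbs n ω ≠ 0 := by
    intro n
    rw [ae_iff]
    have h0 : P {ω | fbs n ω = 0} = 0 := by
      refine hnull n _ (hfbs n (measurableSet_singleton 0)) ?_
      have h := setLIntegral_congr_fun (μ := ν n) (s := {ω | fbs n ω = 0})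
        (f := fbs n) (g := fun _ => 0) (hfbs n (measurableSet_singleton 0))
        (fun ω hω => hω)
      rw [h, lintegral_zero]
    simpa using h0
  have hfbsT : ∀ n, ∀ᵐ ω ∂P, fbs n ω ≠ ∞ := by
    intro n
    rw [ae_iff]
    have hν0 : (ν n) {ω | fbs n ω = ∞} = 0 := by
      have := ae_lt_top (μ := ν n) (hfbs n) (by rw [hfbs_int n]; exact ENNReal.one_ne_top)
      rw [ae_iff] at this
      simpa [lt_top_iff_ne_top] using this
    have h0 : P {ω | fbs n ω = ∞} = 0 :=
      hnull n _ (hfbs n (measurableSet_singleton ⊤)) (setLIntegral_measure_zero _ _ hν0)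
    simpa using h0
  have hfbT : ∀ n, ∀ᵐ ω ∂P, fb n ω ≠ ∞ := by
    intro n
    rw [ae_iff]
    have hν0 : (ν n) {ω | fb n ω = ∞} = 0 := by
      have := ae_lt_top (μ := ν n) (hfb n) (by rw [hfb_int n]; exact ENNReal.one_ne_top)
      rw [ae_iff] at this
      simpa [lt_top_iff_ne_top] using this
    have h0 : P {ω | fb n ω = ∞} = 0 :=
      hnull n _ (hfb n (measurableSet_singleton ⊤)) (setLIntegral_measure_zero _ _ hν0)
    simpa using h0
  have hftls0 : ∀ n, ∀ᵐ ω ∂P, ftls n ω ≠ 0 := by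
    intro n
    rw [ae_iff]
    have h0 : P {ω | ftls n ω = 0} = 0 := by
      refine hnullt n _ (hftls n (measurableSet_singleton 0)) ?_
      have h := setLIntegral_congr_fun (μ := (ν n).trim (hFt n)) (s := {ω | ftls n ω = 0})
        (f := ftls n) (g := fun _ => 0) (hftls n (measurableSet_singleton 0))
        (fun ω hω => hω)
      rw [h, lintegral_zero]
    simpa using h0
  have hftlsT : ∀ n, ∀ᵐ ω ∂P, ftls n ω ≠ ∞ := by
    intro n
    rw [ae_iff]
    have hν0 : ((ν n).trim (hFt n)) {ω | ftls n ω = ∞} = 0 := by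
      have := ae_lt_top (μ := (ν n).trim (hFt n)) (hftls n)
        (by rw [hftls_int n]; exact ENNReal.one_ne_top)
      rw [ae_iff] at this
      simpa [lt_top_iff_ne_top] using this
    have h0 : P {ω | ftls n ω = ∞} = 0 :=
      hnullt n _ (hftls n (measurableSet_singleton ⊤)) (setLIntegral_measure_zero _ _ hν0)
    simpa using h0
  have hftlT : ∀ n, ∀ᵐ ω ∂P, ftl n ω ≠ ∞ := by
    intro n
    rw [ae_iff]
    have hν0 : ((ν n).trim (hFt n)) {ω | ftl n ω = ∞} = 0 := by
      have := ae_lt_top (μ := (ν n).trim (hFt n)) (hftl n)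
        (by rw [hftl_int n]; exact ENNReal.one_ne_top)
      rw [ae_iff] at this
      simpa [lt_top_iff_ne_top] using this
    have h0 : P {ω | ftl n ω = ∞} = 0 :=
      hnullt n _ (hftl n (measurableSet_singleton ⊤)) (setLIntegral_measure_zero _ _ hν0)
    simpa using h0
  -- key: a.e., ftl = 0 implies fb/fbs = 0
  have hE : ∀ n, ∀ᵐ ω ∂P, ftl n ω = 0 → fb n ω / fbs n ω = 0 := by
    intro n
    set s : Set Ω := {ω | ftl n ω = 0} with hs_def
    have hs : MeasurableSet[Ft n] s := hftl n (measurableSet_singleton 0)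
    have hsF : MeasurableSet[F n] s := hFt n _ hs
    have hsM : MeasurableSet s := hF n _ hsF
    have hXF : Measurable[F n] (fun ω => fb n ω / fbs n ω) := (hfb n).div (hfbs n)
    have h1 : ∫⁻ ω in s, fb n ω / fbs n ω ∂P = 0 := by
      refine le_antisymm ?_ zero_le
      calc ∫⁻ ω in s, fb n ω / fbs n ω ∂P
          = ∫⁻ ω, s.indicator (fun ω => fb n ω / fbs n ω) ω ∂P := by
            rw [lintegral_indicator hsM]
        _ = ∫⁻ ω, fbs n ω * s.indicator (fun ω => fb n ω / fbs n ω) ω ∂(ν n) :=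
            hA n _ (hXF.indicator hsF)
        _ ≤ ∫⁻ ω, s.indicator (fb n) ω ∂(ν n) := by
            refine lintegral_mono fun ω => ?_
            by_cases hω : ω ∈ s
            · simp only [Set.indicator_of_mem hω]
              exact ENNReal.mul_div_le
            · simp [Set.indicator_of_notMem hω]
        _ = ∫⁻ ω in s, fb n ω ∂(ν n) := by rw [lintegral_indicator hsF]
        _ = ((ν n).withDensity (fb n)) s := (withDensity_apply _ hsF).symm
        _ = (((ν n).withDensity (fb n)).trim (hFt n)) s :=
            (trim_measurableSet_eq (hFt n) hs).symm
        _ = (((ν n).trim (hFt n)).withDensity (ftl n)) s := by rw [hrt n]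
        _ = ∫⁻ ω in s, ftl n ω ∂((ν n).trim (hFt n)) := withDensity_apply _ hs
        _ = 0 := by
            have h := setLIntegral_congr_fun (μ := (ν n).trim (hFt n)) (s := s)
              (f := ftl n) (g := fun _ => 0) hs (fun ω hω => hω)
            rw [h, lintegral_zero]
    have h2 : (fun ω => fb n ω / fbs n ω) =ᵐ[P.restrict s] 0 := by
      rw [← lintegral_eq_zero_iff (hXF.mono (hF n) le_rfl)]
      exact h1
    have h3 := (ae_restrict_iff' hsM).mp h2
    filter_upwards [h3] with ω hω h0
    exact hω h0
  -- Markov: the integral of Z is at most 1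
  have hqF : ∀ n, Measurable[Ft n] (fun ω => ftls n ω / ftl n ω) :=
    fun n => (hftls n).div (hftl n)
  have hZ : ∀ n, ∫⁻ ω, (fb n ω / fbs n ω) * (ftls n ω / ftl n ω) ∂P ≤ 1 := by
    intro n
    have hZF : Measurable[F n] (fun ω => (fb n ω / fbs n ω) * (ftls n ω / ftl n ω)) :=
      ((hfb n).div (hfbs n)).mul ((hqF n).mono (hFt n) le_rfl)
    calc ∫⁻ ω, (fb n ω / fbs n ω) * (ftls n ω / ftl n ω) ∂P
        = ∫⁻ ω, fbs n ω * ((fb n ω / fbs n ω) * (ftls n ω / ftl n ω)) ∂(ν n) := hA n _ hZF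
      _ ≤ ∫⁻ ω, fb n ω * (ftls n ω / ftl n ω) ∂(ν n) := by
          refine lintegral_mono fun ω => ?_
          rw [← mul_assoc]
          exact mul_le_mul_left ENNReal.mul_div_le _
      _ = ∫⁻ ω, ftls n ω / ftl n ω ∂((ν n).withDensity (fb n)) :=
          (lintegral_withDensity_eq_lintegral_mul (ν n) (hfb n)
            ((hqF n).mono ((hFt n).trans le_rfl) le_rfl)).symm
      _ = ∫⁻ ω, ftl n ω * (ftls n ω / ftl n ω) ∂((ν n).trim (hFt n)) := hC n _ (hqF n)
      _ ≤ ∫⁻ ω, ftls n ω ∂((ν n).trim (hFt n)) :=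
          lintegral_mono fun ω => ENNReal.mul_div_le
      _ = 1 := hftls_int n
  -- Markov + Borel-Cantelli
  have hZmeas : ∀ n, Measurable (fun ω => (fb n ω / fbs n ω) * (ftls n ω / ftl n ω)) :=
    fun n => (((hfb n).div (hfbs n)).mul ((hqF n).mono (hFt n) le_rfl)).mono (hF n) le_rfl
  set B : ℕ → Set Ω :=
    fun n => {ω | (n : ℝ≥0∞) ^ 2 ≤ (fb n ω / fbs n ω) * (ftls n ω / ftl n ω)} with hB_def
  have hBn : ∀ n : ℕ, 1 ≤ n → P (B n) ≤ (((n : ℝ≥0∞)) ^ 2)⁻¹ := by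
    intro n hn
    have h := mul_meas_ge_le_lintegral₀ (μ := P) (hZmeas n).aemeasurable ((n : ℝ≥0∞) ^ 2)
    have h2 : (n : ℝ≥0∞) ^ 2 * P (B n) ≤ 1 := le_trans h (hZ n)
    rw [ENNReal.le_inv_iff_mul_le, mul_comm]
    exact h2
  have htsum : (∑' n, P (B n)) ≠ ∞ := by
    set g : ℕ → ℝ≥0 := fun n => if n = 0 then 1 else ((n : ℝ≥0) ^ 2)⁻¹ with hg_def
    have hb : ∀ n : ℕ, P (B n) ≤ (g n : ℝ≥0∞) := by
      intro n
      rcases Nat.eq_zero_or_pos n with h | h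
      · subst h
        simp only [hg_def, if_pos rfl, ENNReal.coe_one]
        exact prob_le_one
      · have hne : n ≠ 0 := h.ne'
        refine le_trans (hBn n h) (le_of_eq ?_)
        simp only [hg_def, if_neg hne]
        rw [ENNReal.coe_inv (by positivity), ENNReal.coe_pow, ENNReal.coe_natCast]
    have hgs : Summable g := by
      rw [← NNReal.summable_coe]
      have h1 : Summable (fun n : ℕ => ((n : ℝ) ^ 2)⁻¹) := by
        simpa [one_div] using (Real.summable_one_div_nat_pow (p := 2)).mpr one_lt_two
      have h2 : Summable (fun n : ℕ => ((g (n + 1) : ℝ))) := by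
        refine ((summable_nat_add_iff 1).mpr h1).congr fun n => ?_
        simp only [hg_def, if_neg (Nat.succ_ne_zero n)]
        push_cast
        norm_num
      exact (summable_nat_add_iff 1).mp h2
    have hle : (∑' n, P (B n)) ≤ ∑' n, (g n : ℝ≥0∞) := ENNReal.tsum_le_tsum hb
    exact (lt_of_le_of_lt hle (ENNReal.tsum_coe_ne_top_iff_summable.mpr hgs).lt_top).ne
  have hBC : ∀ᵐ ω ∂P, ∀ᶠ n in atTop, ω ∉ B n := ae_eventually_notMem htsum
  have hgood : ∀ᵐ ω ∂P, ∀ n : ℕ, fbs n ω ≠ 0 ∧ fbs n ω ≠ ∞ ∧ fb n ω ≠ ∞ ∧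
      ftls n ω ≠ 0 ∧ ftls n ω ≠ ∞ ∧ ftl n ω ≠ ∞ ∧
      (ftl n ω = 0 → fb n ω / fbs n ω = 0) := by
    rw [ae_all_iff]
    intro n
    filter_upwards [hfbs0 n, hfbsT n, hfbT n, hftls0 n, hftlsT n, hftlT n, hE n] with
      ω u1 u2 u3 u4 u5 u6 u7
    exact ⟨u1, u2, u3, u4, u5, u6, u7⟩
  have hpoint : ∀ n : ℕ, ∀ ω : Ω, (ftl n ω = 0 → fb n ω / fbs n ω = 0) → ftls n ω ≠ 0 →
      ftls n ω ≠ ∞ → ftl n ω ≠ ∞ → ω ∉ B n →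
      fb n ω / fbs n ω ≤ (n : ℝ≥0∞) ^ 2 * (ftl n ω / ftls n ω) := by
    intro n ω h0 h4 h5 h6 hBω
    by_cases hftl0 : ftl n ω = 0
    · rw [h0 hftl0]
      exact zero_le
    · have hZlt : (fb n ω / fbs n ω) * (ftls n ω / ftl n ω) ≤ (n : ℝ≥0∞) ^ 2 :=
        (not_le.mp hBω).le
      have hcancel : ftls n ω / ftl n ω * (ftl n ω / ftls n ω) = 1 := by
        rw [div_eq_mul_inv, div_eq_mul_inv, mul_comm (ftl n ω), mul_mul_mul_comm,
          ENNReal.mul_inv_cancel h4 h5, ENNReal.inv_mul_cancel hftl0 h6, one_mul]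
      calc fb n ω / fbs n ω
          = (fb n ω / fbs n ω) * (ftls n ω / ftl n ω) * (ftl n ω / ftls n ω) := by
            rw [mul_assoc, hcancel, mul_one]
        _ ≤ (n : ℝ≥0∞) ^ 2 * (ftl n ω / ftls n ω) := mul_le_mul_left hZlt _
  have hfin : ∀ᵐ ω ∂P, ∀ᶠ n : ℕ in atTop,
      fb n ω / fbs n ω ≤ (n : ℝ≥0∞) ^ 2 * (ftl n ω / ftls n ω) := by
    filter_upwards [hBC, hgood] with ω w1 w2
    filter_upwards [w1] with n wn
    exact hpoint n ω (w2 n).2.2.2.2.2.2 (w2 n).2.2.2.1 (w2 n).2.2.2.2.1 (w2 n).2.2.2.2.2.1 wn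
  refine ⟨⟨fun n ω =>
      if fb n ω / fbs n ω ≤ (n : ℝ≥0∞) ^ 2 * (ftl n ω / ftls n ω)
      then -(2 * Real.log n) / n
      else if h : ∃ e : ℝ,
          (((n : ℝ)⁻¹ : ℝ) : EReal) * ENNReal.log (fb n ω / fbs n ω) + (e : EReal)
            ≤ (((n : ℝ)⁻¹ : ℝ) : EReal) * ENNReal.log (ftl n ω / ftls n ω)
        then h.choose else 0, ?_, ?_⟩, hfin⟩
  · -- tendsto
    filter_upwards [hfin] with ω hω
    have hlim : Tendsto (fun n : ℕ => -(2 * Real.log n) / n) atTop (nhds 0) := by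
      have h1 : Tendsto (fun x : ℝ => Real.log x / x) atTop (nhds 0) :=
        Real.isLittleO_log_id_atTop.tendsto_div_nhds_zero
      have h2 := (h1.comp tendsto_natCast_atTop_atTop).const_mul (-2 : ℝ)
      rw [mul_zero] at h2
      refine h2.congr fun n => ?_
      simp only [Function.comp]
      ring
    refine Tendsto.congr' ?_ hlim
    filter_upwards [hω] with n hn
    rw [if_pos hn]
  · -- the inequality
    filter_upwards [hgood] with ω hω n hn1
    obtain ⟨g1, g2, g3, g4, g5, g6, g7⟩ := hω n
    have hn0 : (0 : ℝ) < n := by exact_mod_cast Nat.pos_of_ne_zero (by omega)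
    have hinv : (0 : ℝ) < (n : ℝ)⁻¹ := inv_pos.mpr hn0
    have hXtop : fb n ω / fbs n ω ≠ ∞ := by
      rw [Ne, ENNReal.div_eq_top]
      push_neg
      exact ⟨fun _ => g1, fun h => absurd h g3⟩
    have hYtop : ftl n ω / ftls n ω ≠ ∞ := by
      rw [Ne, ENNReal.div_eq_top]
      push_neg
      exact ⟨fun _ => g4, fun h => absurd h g6⟩
    by_cases hc : fb n ω / fbs n ω ≤ (n : ℝ≥0∞) ^ 2 * (ftl n ω / ftls n ω)
    · rw [if_pos hc]
      by_cases hX0 : fb n ω / fbs n ω = 0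
      · rw [hX0, ENNReal.log_zero, EReal.mul_bot_of_pos (by exact_mod_cast hinv),
          EReal.bot_add]
        exact bot_le
      · have hY0 : ftl n ω / ftls n ω ≠ 0 := by
          intro h
          rw [h, mul_zero, le_zero_iff] at hc
          exact hX0 hc
        have hlogX := ENNReal.log_pos_real hX0 hXtop
        have hlogY := ENNReal.log_pos_real hY0 hYtop
        have hn2 : ((n : ℝ≥0∞) ^ 2) ≠ 0 := by
          exact pow_ne_zero _ (Nat.cast_ne_zero.mpr (by omega))
        have hn2T : ((n : ℝ≥0∞) ^ 2) ≠ ∞ := by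
          exact ENNReal.pow_ne_top (ENNReal.natCast_ne_top n)
        have hlogn2 : ENNReal.log ((n : ℝ≥0∞) ^ 2) = ((2 * Real.log n : ℝ) : EReal) := by
          rw [ENNReal.log_pos_real hn2 hn2T]
          congr 1
          have ht : (((n : ℝ≥0∞)) ^ 2).toReal = ((n : ℝ)) ^ 2 := by simp
          rw [ht, Real.log_pow]
          push_cast
          ring
        have hlog_le : ((Real.log (fb n ω / fbs n ω).toReal : ℝ) : EReal)
            ≤ ((2 * Real.log n + Real.log (ftl n ω / ftls n ω).toReal : ℝ) : EReal) := by
          calc ((Real.log (fb n ω / fbs n ω).toReal : ℝ) : EReal)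
              = ENNReal.log (fb n ω / fbs n ω) := hlogX.symm
            _ ≤ ENNReal.log ((n : ℝ≥0∞) ^ 2 * (ftl n ω / ftls n ω)) :=
                ENNReal.log_monotone hc
            _ = ENNReal.log ((n : ℝ≥0∞) ^ 2) + ENNReal.log (ftl n ω / ftls n ω) :=
                ENNReal.log_mul_add
            _ = ((2 * Real.log n : ℝ) : EReal) +
                ((Real.log (ftl n ω / ftls n ω).toReal : ℝ) : EReal) := by
                rw [hlogn2, hlogY]
            _ = ((2 * Real.log n + Real.log (ftl n ω / ftls n ω).toReal : ℝ) : EReal) := by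
                norm_cast
        rw [EReal.coe_le_coe_iff] at hlog_le
        rw [hlogX, hlogY, ← EReal.coe_mul, ← EReal.coe_mul, ← EReal.coe_add,
          EReal.coe_le_coe_iff]
        have key := mul_le_mul_of_nonneg_left hlog_le hinv.le
        have e1 : (n : ℝ)⁻¹ * (2 * Real.log n + Real.log (ftl n ω / ftls n ω).toReal)
            = 2 * Real.log n * (n : ℝ)⁻¹
              + (n : ℝ)⁻¹ * Real.log (ftl n ω / ftls n ω).toReal := by ring
        rw [e1] at key
        have e2 : -(2 * Real.log n) / (n : ℝ) = -(2 * Real.log n * (n : ℝ)⁻¹) := by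
          ring
        rw [e2]
        linarith
    · rw [if_neg hc]
      have hex : ∃ e : ℝ,
          (((n : ℝ)⁻¹ : ℝ) : EReal) * ENNReal.log (fb n ω / fbs n ω) + (e : EReal)
            ≤ (((n : ℝ)⁻¹ : ℝ) : EReal) * ENNReal.log (ftl n ω / ftls n ω) := by
        by_cases hX0 : fb n ω / fbs n ω = 0
        · refine ⟨0, ?_⟩
          rw [hX0, ENNReal.log_zero, EReal.mul_bot_of_pos (by exact_mod_cast hinv),
            EReal.bot_add]
          exact bot_le
        · have hY0 : ftl n ω / ftls n ω ≠ 0 := by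
            intro h
            rcases ENNReal.div_eq_zero_iff.mp h with h' | h'
            · exact hX0 (g7 h')
            · exact g5 h'
          refine ⟨(n : ℝ)⁻¹ * Real.log (ftl n ω / ftls n ω).toReal
            - (n : ℝ)⁻¹ * Real.log (fb n ω / fbs n ω).toReal, ?_⟩
          rw [ENNReal.log_pos_real hX0 hXtop, ENNReal.log_pos_real hY0 hYtop,
            ← EReal.coe_mul, ← EReal.coe_mul, ← EReal.coe_add, EReal.coe_le_coe_iff]
          ring_nf
          exact le_refl _
      rw [dif_pos hex]
      exact hex.choose_spec
end

section
/- Let λ be a non-zero σ-finite measure on a measurable space (Θ, T) and for each n let (g_{θ,n})_{θ∈Θ} and g*ₙ be nonnegative jointly measurable random variables on a probability space (Ω, F, P) with g*ₙ > 0 P-a.s. Assume that for every δ > 0 there exists a set Θ_δ ∈ T with λ(Θ_δ) > 0 such that for every θ ∈ Θ_δ, liminf_n n⁻¹ log(g_{θ,n}/g*ₙ) ≥ −δ P-a.s. Then for every ε > 0, P( ∫ λ(dθ) g_{θ,n}/g*ₙ ≤ e^{−εn} infinitely often ) = 0. -/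
open MeasureTheory Filter
open scoped ENNReal

/-- Auxiliary: from `liminf n⁻¹ log (r n) ≥ -(ε/2)` deduce
`liminf e^{εn} r n = ⊤`. -/
lemma aux_liminf_top (ε : ℝ) (hε : 0 < ε) (r : ℕ → ℝ≥0∞)
    (h : ((-(ε/2) : ℝ) : EReal) ≤ Filter.atTop.liminf fun n : ℕ =>
      (((n : ℝ)⁻¹ : ℝ) : EReal) * ENNReal.log (r n)) :
    Filter.atTop.liminf (fun n : ℕ => ENNReal.ofReal (Real.exp (ε * n)) * r n) = ⊤ := by
  set c : ℝ := 3 * ε / 4 with hc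
  have hlt : ((-c : ℝ) : EReal) < Filter.atTop.liminf fun n : ℕ =>
      (((n : ℝ)⁻¹ : ℝ) : EReal) * ENNReal.log (r n) := by
    refine lt_of_lt_of_le ?_ h
    exact_mod_cast (by linarith : -c < -(ε/2))
  have hev := Filter.eventually_lt_of_lt_liminf hlt
  have hev2 : ∀ᶠ n : ℕ in Filter.atTop,
      ENNReal.ofReal (Real.exp (ε/4 * n)) ≤ ENNReal.ofReal (Real.exp (ε * n)) * r n := by
    filter_upwards [hev, Filter.eventually_ge_atTop 1] with n hn hn1
    have hnpos : (0 : ℝ) < n := by exact_mod_cast hn1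
    have hr : ENNReal.ofReal (Real.exp (-c * n)) ≤ r n := by
      have hlog : ((-c * n : ℝ) : EReal) ≤ ENNReal.log (r n) := by
        rcases eq_or_ne (r n) ⊤ with h0 | h0
        · simp [h0]
        rcases eq_or_ne (r n) 0 with h1 | h1
        · exfalso
          rw [h1] at hn
          simp only [ENNReal.log_zero] at hn
          rw [EReal.coe_mul_bot_of_pos (by positivity)] at hn
          exact absurd hn (by simp)
        · have := ENNReal.log_pos_real h1 h0
          rw [this] at hn ⊢
          rw [← EReal.coe_mul] at hn
          rw [EReal.coe_lt_coe_iff] at hn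
          rw [EReal.coe_le_coe_iff]
          have : -c * n < n * ((n : ℝ)⁻¹ * Real.log (r n).toReal) := by
            have := mul_lt_mul_of_pos_left hn hnpos
            linarith [this]
          rw [← mul_assoc, mul_inv_cancel₀ hnpos.ne', one_mul] at this
          linarith
      rw [← ENNReal.log_le_log_iff, ENNReal.log_ofReal_of_pos (Real.exp_pos _),
        Real.log_exp]
      exact hlog
    calc ENNReal.ofReal (Real.exp (ε/4 * n))
        = ENNReal.ofReal (Real.exp (ε * n) * Real.exp (-c * n)) := by
          rw [← Real.exp_add, hc]; ring_nf
      _ = ENNReal.ofReal (Real.exp (ε * n)) * ENNReal.ofReal (Real.exp (-c * n)) :=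
          ENNReal.ofReal_mul (Real.exp_pos _).le
      _ ≤ ENNReal.ofReal (Real.exp (ε * n)) * r n := by
          exact mul_le_mul_right hr _
  have htop : Filter.Tendsto (fun n : ℕ => ENNReal.ofReal (Real.exp (ε/4 * n)))
      Filter.atTop (nhds ⊤) := by
    apply ENNReal.tendsto_ofReal_atTop.comp
    apply Real.tendsto_exp_atTop.comp
    exact Filter.Tendsto.const_mul_atTop (by positivity) tendsto_natCast_atTop_atTop
  have := Filter.liminf_le_liminf hev2
  rw [htop.liminf_eq] at this
  exact top_le_iff.mp this

/-- Auxiliary: multiplying through by `e^{-t}`. -/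
lemma aux_lt_of_one_lt {x : ℝ≥0∞} {t : ℝ}
    (h : 1 < ENNReal.ofReal (Real.exp t) * x) :
    ENNReal.ofReal (Real.exp (-t)) < x := by
  set b := ENNReal.ofReal (Real.exp (-t)) with hb
  have hbc : b * ENNReal.ofReal (Real.exp t) = 1 := by
    rw [hb, ← ENNReal.ofReal_mul (Real.exp_pos _).le, ← Real.exp_add]
    simp
  have hb0 : b ≠ 0 := by
    simp [hb, ENNReal.ofReal_eq_zero, (Real.exp_pos _).not_ge]
  have hbt : b ≠ ⊤ := ENNReal.ofReal_ne_top
  calc b = b * 1 := (mul_one b).symm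
    _ < b * (ENNReal.ofReal (Real.exp t) * x) :=
        (ENNReal.mul_lt_mul_iff_right hb0 hbt).mpr h
    _ = (b * ENNReal.ofReal (Real.exp t)) * x := (mul_assoc _ _ _).symm
    _ = x := by rw [hbc, one_mul]

/-- (Merging with probability one of the prior-mixed likelihood.)
If the prior `λ` is information dense at the truth, in the sense that for every `δ > 0`
there is a set `Θ_δ` of positive `λ`-measure on which `liminf n⁻¹ log(g_{θ,n}/g*ₙ) ≥ −δ`
`P`-a.s., then for every `ε > 0`, `P`-a.s. eventually
`∫ λ(dθ) g_{θ,n}/g*ₙ > e^{−εn}` (i.e. the event `{∫ λ(dθ) g_{θ,n}/g*ₙ ≤ e^{−εn}}`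
occurs infinitely often with `P`-probability zero). -/
theorem merging_with_probability_one {Ω Θ : Type*} {mΩ : MeasurableSpace Ω}
    {mΘ : MeasurableSpace Θ}
    (P : Measure Ω) [IsProbabilityMeasure P]
    (lam : Measure Θ) [SigmaFinite lam] (hlam : lam ≠ 0)
    (g : Θ → ℕ → Ω → ℝ≥0∞) (gs : ℕ → Ω → ℝ≥0∞)
    (hg : ∀ n, Measurable fun p : Θ × Ω => g p.1 n p.2)
    (hgs : ∀ n, Measurable (gs n))
    (hgspos : ∀ n, ∀ᵐ ω ∂P, 0 < gs n ω)
    (hdense : ∀ δ : ℝ, 0 < δ → ∃ Θδ : Set Θ, MeasurableSet Θδ ∧ 0 < lam Θδ ∧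
      ∀ θ ∈ Θδ, ∀ᵐ ω ∂P,
        ((-δ : ℝ) : EReal) ≤ Filter.atTop.liminf fun n : ℕ =>
          (((n : ℝ)⁻¹ : ℝ) : EReal) * ENNReal.log (g θ n ω / gs n ω)) :
    ∀ ε : ℝ, 0 < ε → ∀ᵐ ω ∂P, ∀ᶠ n : ℕ in atTop,
      ENNReal.ofReal (Real.exp (-ε * n)) < ∫⁻ θ, g θ n ω / gs n ω ∂lam := by
  intro ε hε
  obtain ⟨S, hSm, hSpos, hS⟩ := hdense (ε/2) (by linarith)
  set lam' := lam.restrict S with hlam'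
  -- measurability of the liminf function on the product
  have hmeasn : ∀ n : ℕ, Measurable fun p : Θ × Ω =>
      ENNReal.ofReal (Real.exp (ε * n)) * (g p.1 n p.2 / gs n p.2) :=
    fun n => ((hg n).div ((hgs n).comp measurable_snd)).const_mul _
  have hFmeas : Measurable fun p : Θ × Ω =>
      Filter.atTop.liminf (fun n : ℕ =>
        ENNReal.ofReal (Real.exp (ε * n)) * (g p.1 n p.2 / gs n p.2)) :=
    Measurable.liminf hmeasn
  have hset : MeasurableSet {p : Θ × Ω |
      Filter.atTop.liminf (fun n : ℕ =>
        ENNReal.ofReal (Real.exp (ε * n)) * (g p.1 n p.2 / gs n p.2)) = ⊤} :=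
    hFmeas (measurableSet_singleton ⊤)
  -- a.e. θ in S, a.e. ω, the liminf is ⊤
  have h1 : ∀ᵐ θ ∂lam', ∀ᵐ ω ∂P,
      Filter.atTop.liminf (fun n : ℕ =>
        ENNReal.ofReal (Real.exp (ε * n)) * (g θ n ω / gs n ω)) = ⊤ := by
    filter_upwards [ae_restrict_mem hSm] with θ hθ
    filter_upwards [hS θ hθ] with ω hω
    exact aux_liminf_top ε hε _ hω
  -- swap the a.e. quantifiers by Fubini
  have h2 : ∀ᵐ ω ∂P, ∀ᵐ θ ∂lam',
      Filter.atTop.liminf (fun n : ℕ =>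
        ENNReal.ofReal (Real.exp (ε * n)) * (g θ n ω / gs n ω)) = ⊤ :=
    (Measure.ae_ae_comm hset).mp h1
  filter_upwards [h2] with ω hω
  -- pointwise measurability in θ
  have hmθ : ∀ n : ℕ, Measurable fun θ : Θ => g θ n ω / gs n ω := by
    intro n
    exact ((hg n).comp (measurable_id.prodMk measurable_const)).div measurable_const
  -- the lintegral of the liminf is ⊤
  have hint : (∫⁻ θ, Filter.atTop.liminf (fun n : ℕ =>
      ENNReal.ofReal (Real.exp (ε * n)) * (g θ n ω / gs n ω)) ∂lam') = ⊤ := by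
    rw [lintegral_congr_ae hω, lintegral_const, Measure.restrict_apply_univ]
    exact ENNReal.top_mul hSpos.ne'
  have hFatou : (⊤ : ℝ≥0∞) ≤ Filter.atTop.liminf (fun n : ℕ =>
      ENNReal.ofReal (Real.exp (ε * n)) * ∫⁻ θ, g θ n ω / gs n ω ∂lam') := by
    calc (⊤ : ℝ≥0∞) = ∫⁻ θ, Filter.atTop.liminf (fun n : ℕ =>
          ENNReal.ofReal (Real.exp (ε * n)) * (g θ n ω / gs n ω)) ∂lam' := hint.symm
      _ ≤ Filter.atTop.liminf (fun n : ℕ =>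
          ∫⁻ θ, ENNReal.ofReal (Real.exp (ε * n)) * (g θ n ω / gs n ω) ∂lam') :=
          lintegral_liminf_le (fun n => (hmθ n).const_mul _)
      _ = Filter.atTop.liminf (fun n : ℕ =>
          ENNReal.ofReal (Real.exp (ε * n)) * ∫⁻ θ, g θ n ω / gs n ω ∂lam') := by
          congr 1
          funext n
          exact lintegral_const_mul _ (hmθ n)
  have hev : ∀ᶠ n : ℕ in Filter.atTop,
      (1 : ℝ≥0∞) < ENNReal.ofReal (Real.exp (ε * n)) * ∫⁻ θ, g θ n ω / gs n ω ∂lam' :=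
    Filter.eventually_lt_of_lt_liminf (lt_of_lt_of_le (by simp) hFatou)
  filter_upwards [hev] with n hn
  have hle : (∫⁻ θ, g θ n ω / gs n ω ∂lam') ≤ ∫⁻ θ, g θ n ω / gs n ω ∂lam :=
    lintegral_mono' Measure.restrict_le_self le_rfl
  have h1n : (1 : ℝ≥0∞) < ENNReal.ofReal (Real.exp (ε * n)) * ∫⁻ θ, g θ n ω / gs n ω ∂lam :=
    lt_of_lt_of_le hn (mul_le_mul_right hle _)
  have := aux_lt_of_one_lt h1n
  rwa [neg_mul]
end

section
/- Assume the information-denseness condition: for all δ > 0 there exists Θ_δ ∈ T with λ(Θ_δ) > 0 such that for all θ ∈ Θ_δ, liminf_n n⁻¹ log(g_{θ,n}/g*ₙ) ≥ −δ, P-a.s. Then for every approximately P-remote set A ∈ T, the posterior masses λₙ(A) = ∫_A λ(dθ) g_{θ,n} / ∫_Θ λ(dθ) g_{θ,n} converge to 0, P-almost surely. -/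
open MeasureTheory Filter
open scoped ENNReal

/-- Posterior mass of a set `A ⊆ Θ` given the prior `lam` and likelihoods `g θ n ω`. -/
noncomputable def postMass {Ω Θ : Type*} [MeasurableSpace Ω] [MeasurableSpace Θ]
    (lam : Measure Θ) (g : Θ → ℕ → Ω → ℝ≥0∞) (n : ℕ) (A : Set Θ) (ω : Ω) : ℝ≥0∞ :=
  (∫⁻ θ in A, g θ n ω ∂lam) / ∫⁻ θ, g θ n ω ∂lam

/-- `A` is `P`-remote: the prior-mixed likelihood ratio over `A` decays exponentially. -/
def PRemote {Ω Θ : Type*} [MeasurableSpace Ω] [MeasurableSpace Θ]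
    (P : Measure Ω) (lam : Measure Θ) (g : Θ → ℕ → Ω → ℝ≥0∞) (gs : ℕ → Ω → ℝ≥0∞)
    (A : Set Θ) : Prop :=
  ∀ᵐ ω ∂P, Filter.atTop.limsup (fun n : ℕ =>
    (((n : ℝ)⁻¹ : ℝ) : EReal) * ENNReal.log (∫⁻ θ in A, g θ n ω / gs n ω ∂lam)) < 0

/-- `A` is approximately `P`-remote: for every `ε > 0` there is `K_ε` such that `A ∩ K_ε` is
`P`-remote and the posterior mass of `K_εᶜ` is asymptotically at most `ε`, `P`-a.s. -/
def ApproxPRemote {Ω Θ : Type*} [MeasurableSpace Ω] [MeasurableSpace Θ]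
    (P : Measure Ω) (lam : Measure Θ) (g : Θ → ℕ → Ω → ℝ≥0∞) (gs : ℕ → Ω → ℝ≥0∞)
    (A : Set Θ) : Prop :=
  ∀ ε : ℝ, 0 < ε → ∃ K : Set Θ, MeasurableSet K ∧ PRemote P lam g gs (A ∩ K) ∧
    ∀ᵐ ω ∂P, Filter.atTop.limsup (fun n => postMass lam g n Kᶜ ω) ≤ ENNReal.ofReal ε

/-! ### Auxiliary lemmas -/

lemma aux_le_of_inv_mul_lt {n : ℕ} (hn : 1 ≤ n) {L : EReal} {z : ℝ}
    (h : (((n : ℝ)⁻¹ : ℝ) : EReal) * L < (z : EReal)) : L ≤ ((z * n : ℝ) : EReal) := by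
  have hn0 : (0:ℝ) < (n:ℝ) := by exact_mod_cast hn
  have hninv : (0:ℝ) < ((n:ℝ))⁻¹ := inv_pos.mpr hn0
  induction L using EReal.rec with
  | bot => exact bot_le
  | coe r =>
      rw [← EReal.coe_mul, EReal.coe_lt_coe_iff] at h
      rw [EReal.coe_le_coe_iff]
      have h2 : r / n < z := by rwa [div_eq_inv_mul]
      have := (div_lt_iff₀ hn0).mp h2
      nlinarith
  | top =>
      rw [EReal.coe_mul_top_of_pos hninv] at h
      exact absurd h not_top_lt

lemma aux_le_of_lt_inv_mul {n : ℕ} (hn : 1 ≤ n) {L : EReal} {z : ℝ}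
    (h : (z : EReal) < (((n : ℝ)⁻¹ : ℝ) : EReal) * L) : ((z * n : ℝ) : EReal) ≤ L := by
  have hn0 : (0:ℝ) < (n:ℝ) := by exact_mod_cast hn
  have hninv : (0:ℝ) < ((n:ℝ))⁻¹ := inv_pos.mpr hn0
  induction L using EReal.rec with
  | bot =>
      rw [EReal.coe_mul_bot_of_pos hninv] at h
      exact absurd h not_lt_bot
  | coe r =>
      rw [← EReal.coe_mul, EReal.coe_lt_coe_iff] at h
      rw [EReal.coe_le_coe_iff]
      have h2 : z < r / n := by rwa [div_eq_inv_mul]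
      have := (lt_div_iff₀ hn0).mp h2
      nlinarith
  | top => exact le_top

lemma exists_exp_upper {I : ℕ → ℝ≥0∞}
    (h : atTop.limsup (fun n : ℕ => (((n : ℝ)⁻¹ : ℝ) : EReal) * ENNReal.log (I n)) < 0) :
    ∃ c : ℝ, c < 0 ∧ ∀ᶠ n : ℕ in atTop, I n ≤ ENNReal.ofReal (Real.exp (c * n)) := by
  obtain ⟨z, hz1, hz2⟩ := exists_between h
  have hzt : z ≠ ⊤ := (hz2.trans_le le_top).ne
  have hzb : z ≠ ⊥ := by rintro rfl; exact not_lt_bot hz1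
  refine ⟨z.toReal, ?_, ?_⟩
  · have : ((z.toReal : ℝ) : EReal) < ((0:ℝ) : EReal) := by
      rw [EReal.coe_toReal hzt hzb]; exact_mod_cast hz2
    exact_mod_cast this
  · filter_upwards [eventually_lt_of_limsup_lt hz1, eventually_ge_atTop 1] with n hn hn1
    have hn' : (((n : ℝ)⁻¹ : ℝ) : EReal) * ENNReal.log (I n) < ((z.toReal : ℝ) : EReal) := by
      rwa [EReal.coe_toReal hzt hzb]
    have hlog := aux_le_of_inv_mul_lt hn1 hn'
    have hkey : ENNReal.log (ENNReal.ofReal (Real.exp (z.toReal * n)))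
        = ((z.toReal * n : ℝ) : EReal) := by
      rw [ENNReal.log_ofReal_of_pos (Real.exp_pos _), Real.log_exp]
    rw [← hkey] at hlog
    exact ENNReal.log_le_log_iff.mp hlog

lemma eventually_exp_le {J : ℕ → ℝ≥0∞} {a b : ℝ} (hba : b < a)
    (h : ((a : ℝ) : EReal) ≤ atTop.liminf
      (fun n : ℕ => (((n : ℝ)⁻¹ : ℝ) : EReal) * ENNReal.log (J n))) :
    ∀ᶠ n : ℕ in atTop, ENNReal.ofReal (Real.exp (b * n)) ≤ J n := by
  have hlt : ((b : ℝ) : EReal) < atTop.liminf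
      (fun n : ℕ => (((n : ℝ)⁻¹ : ℝ) : EReal) * ENNReal.log (J n)) :=
    lt_of_lt_of_le (by exact_mod_cast hba) h
  filter_upwards [eventually_lt_of_lt_liminf hlt, eventually_ge_atTop 1] with n hn hn1
  have hlog := aux_le_of_lt_inv_mul hn1 hn
  have hkey : ENNReal.log (ENNReal.ofReal (Real.exp (b * n))) = ((b * n : ℝ) : EReal) := by
    rw [ENNReal.log_ofReal_of_pos (Real.exp_pos _), Real.log_exp]
  rw [← hkey] at hlog
  exact ENNReal.log_le_log_iff.mp hlog

lemma denom_lower {Θ : Type*} [MeasurableSpace Θ] (μ : Measure Θ) (hμ : μ Set.univ ≠ 0)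
    {F : ℕ → Θ → ℝ≥0∞} (hF : ∀ n, Measurable (F n)) {δ δ' : ℝ} (hδ : 0 < δ) (hδ' : δ < δ')
    (hae : ∀ᵐ θ ∂μ, ((-δ : ℝ) : EReal) ≤ atTop.liminf (fun n : ℕ =>
       (((n : ℝ)⁻¹ : ℝ) : EReal) * ENNReal.log (F n θ))) :
    ∀ᶠ n : ℕ in atTop, ENNReal.ofReal (Real.exp (-δ' * n)) ≤ ∫⁻ θ, F n θ ∂μ := by
  set b : ℝ := -((δ + δ') / 2) with hbdef
  have hb1 : b < -δ := by rw [hbdef]; linarith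
  have hb2 : 0 < δ' + b := by rw [hbdef]; linarith
  have h_liminf_top : ∀ᵐ θ ∂μ,
      atTop.liminf (fun n : ℕ => ENNReal.ofReal (Real.exp (δ' * n)) * F n θ) = ⊤ := by
    filter_upwards [hae] with θ hθ
    have hev := eventually_exp_le hb1 hθ
    have h1 : Tendsto (fun n : ℕ => ENNReal.ofReal (Real.exp ((δ' + b) * n))) atTop (nhds ⊤) := by
      apply ENNReal.tendsto_ofReal_atTop.comp
      apply Real.tendsto_exp_atTop.comp
      exact Tendsto.const_mul_atTop hb2 tendsto_natCast_atTop_atTop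
    have hptwise : ∀ᶠ n : ℕ in atTop, ENNReal.ofReal (Real.exp ((δ' + b) * n)) ≤
        ENNReal.ofReal (Real.exp (δ' * n)) * F n θ := by
      filter_upwards [hev] with n hn
      calc ENNReal.ofReal (Real.exp ((δ' + b) * n))
          = ENNReal.ofReal (Real.exp (δ' * n) * Real.exp (b * n)) := by
            rw [← Real.exp_add]; ring_nf
        _ = ENNReal.ofReal (Real.exp (δ' * n)) * ENNReal.ofReal (Real.exp (b * n)) :=
            ENNReal.ofReal_mul (Real.exp_nonneg _)
        _ ≤ ENNReal.ofReal (Real.exp (δ' * n)) * F n θ := mul_le_mul_right hn _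
    have hmono := liminf_le_liminf hptwise
    rw [h1.liminf_eq] at hmono
    exact top_le_iff.mp hmono
  have fatou := lintegral_liminf_le
    (fun n => (hF n).const_mul (ENNReal.ofReal (Real.exp (δ' * n)))) (μ := μ) (u := atTop)
  have htopint : (∫⁻ θ, atTop.liminf
      (fun n : ℕ => ENNReal.ofReal (Real.exp (δ' * n)) * F n θ) ∂μ) = ⊤ := by
    rw [lintegral_congr_ae h_liminf_top, lintegral_const, ENNReal.top_mul hμ]
  rw [htopint] at fatou
  have hev1 : ∀ᶠ n : ℕ in atTop, (1:ℝ≥0∞) <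
      ∫⁻ θ, ENNReal.ofReal (Real.exp (δ' * n)) * F n θ ∂μ :=
    eventually_lt_of_lt_liminf (lt_of_lt_of_le (by simp) fatou)
  filter_upwards [hev1] with n hn
  rw [lintegral_const_mul (ENNReal.ofReal (Real.exp (δ' * (n:ℕ)))) (hF n)] at hn
  set e := ENNReal.ofReal (Real.exp (δ' * n)) with hedef
  have he0 : e ≠ 0 := by
    rw [hedef]; exact (ENNReal.ofReal_pos.mpr (Real.exp_pos _)).ne'
  have het : e ≠ ⊤ := ENNReal.ofReal_ne_top
  have hinv : e⁻¹ ≤ ∫⁻ θ, F n θ ∂μ := by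
    calc e⁻¹ = e⁻¹ * 1 := (mul_one _).symm
      _ ≤ e⁻¹ * (e * ∫⁻ θ, F n θ ∂μ) := mul_le_mul_right hn.le _
      _ = ∫⁻ θ, F n θ ∂μ := by rw [← mul_assoc, ENNReal.inv_mul_cancel he0 het, one_mul]
  have heq : ENNReal.ofReal (Real.exp (-δ' * n)) = e⁻¹ := by
    rw [hedef, neg_mul, Real.exp_neg, ENNReal.ofReal_inv_of_pos (Real.exp_pos _)]
  rw [heq]
  exact hinv

lemma ae_swap_lemma {Ω Θ : Type*} [MeasurableSpace Ω] [MeasurableSpace Θ]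
    (P : Measure Ω) [IsFiniteMeasure P] (ν : Measure Θ) [SigmaFinite ν]
    {V : Θ → Ω → EReal} (hV : Measurable fun p : Θ × Ω => V p.1 p.2) {a : EReal}
    (h : ∀ᵐ θ ∂ν, ∀ᵐ ω ∂P, a ≤ V θ ω) :
    ∀ᵐ ω ∂P, ∀ᵐ θ ∂ν, a ≤ V θ ω := by
  set T : Set (Θ × Ω) := {p | V p.1 p.2 < a} with hTdef
  have hT : MeasurableSet T := hV measurableSet_Iio
  have hT0 : (ν.prod P) T = 0 := by
    rw [Measure.measure_prod_null hT]
    filter_upwards [h] with θ hθ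
    show P {ω | V θ ω < a} = 0
    have h2 : {ω | V θ ω < a} = {ω | ¬ a ≤ V θ ω} := by ext; simp [not_le]
    rw [h2]
    exact ae_iff.mp hθ
  have hswap : (P.prod ν) (Prod.swap ⁻¹' T) = 0 := by
    rw [← Measure.prod_swap, Measure.map_apply measurable_swap hT] at hT0
    exact hT0
  have hsec := (Measure.measure_prod_null (measurable_swap hT)).mp hswap
  filter_upwards [hsec] with ω hω
  have hω' : ν {θ | V θ ω < a} = 0 := hω
  rw [ae_iff]
  have h2 : {θ | ¬ a ≤ V θ ω} = {θ | V θ ω < a} := by ext; simp [not_le]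
  rw [h2]
  exact hω'

/-- Core argument: the posterior mass of any `P`-remote set tends to `0` a.s. -/
lemma premote_post_tendsto_zero {Ω Θ : Type*} {mΩ : MeasurableSpace Ω}
    {mΘ : MeasurableSpace Θ}
    (P : Measure Ω) [IsProbabilityMeasure P]
    (lam : Measure Θ) [SigmaFinite lam]
    (g : Θ → ℕ → Ω → ℝ≥0∞) (gs : ℕ → Ω → ℝ≥0∞)
    (hg : ∀ n, Measurable fun p : Θ × Ω => g p.1 n p.2)
    (hgs : ∀ n, Measurable (gs n))
    (hgspos : ∀ n, ∀ᵐ ω ∂P, 0 < gs n ω)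
    (hdense : ∀ δ : ℝ, 0 < δ → ∃ Θδ : Set Θ, MeasurableSet Θδ ∧ 0 < lam Θδ ∧
      ∀ θ ∈ Θδ, ∀ᵐ ω ∂P,
        ((-δ : ℝ) : EReal) ≤ Filter.atTop.liminf fun n : ℕ =>
          (((n : ℝ)⁻¹ : ℝ) : EReal) * ENNReal.log (g θ n ω / gs n ω))
    (B : Set Θ) (hB : PRemote P lam g gs B) :
    ∀ᵐ ω ∂P, Tendsto (fun n => postMass lam g n B ω) atTop (nhds 0) := by
  have hVmeas : Measurable fun p : Θ × Ω => atTop.liminf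
      (fun n : ℕ => (((n:ℝ)⁻¹ : ℝ) : EReal) * ENNReal.log (g p.1 n p.2 / gs n p.2)) := by
    apply Measurable.liminf
    intro n
    have h1 : Measurable fun p : Θ × Ω => g p.1 n p.2 / gs n p.2 :=
      (hg n).div ((hgs n).comp measurable_snd)
    have h2 : Monotone fun x : EReal => ((((n:ℝ)⁻¹ : ℝ)) : EReal) * x := fun x y hxy =>
      mul_le_mul_of_nonneg_left hxy (by exact_mod_cast inv_nonneg.mpr (Nat.cast_nonneg n))
    exact h2.measurable.comp (ENNReal.log_monotone.measurable.comp h1)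
  have hδpos : ∀ k : ℕ, (0:ℝ) < ((k:ℝ)+1)⁻¹ := fun k => by positivity
  choose Th hThm hThpos hTh using fun k : ℕ => hdense (((k:ℝ)+1)⁻¹) (hδpos k)
  have hswap : ∀ k : ℕ, ∀ᵐ ω ∂P, ∀ᵐ θ ∂(lam.restrict (Th k)),
      ((-(((k:ℝ)+1)⁻¹) : ℝ) : EReal) ≤ atTop.liminf
        (fun n : ℕ => (((n:ℝ)⁻¹ : ℝ) : EReal) * ENNReal.log (g θ n ω / gs n ω)) := by
    intro k
    apply ae_swap_lemma P (lam.restrict (Th k)) hVmeas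
    rw [ae_restrict_iff' (hThm k)]
    exact ae_of_all _ (fun θ hθ => hTh k θ hθ)
  have hdenom : ∀ k : ℕ, ∀ᵐ ω ∂P, ∀ᶠ n : ℕ in atTop,
      ENNReal.ofReal (Real.exp (-(2 * ((k:ℝ)+1)⁻¹) * n)) ≤ ∫⁻ θ, g θ n ω / gs n ω ∂lam := by
    intro k
    filter_upwards [hswap k] with ω hω
    have hF : ∀ n : ℕ, Measurable fun θ => g θ n ω / gs n ω := fun n =>
      ((hg n).comp measurable_prodMk_right).div measurable_const
    have hres : (lam.restrict (Th k)) Set.univ ≠ 0 := by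
      rw [Measure.restrict_apply_univ]; exact (hThpos k).ne'
    have hlt : ((k:ℝ)+1)⁻¹ < 2 * ((k:ℝ)+1)⁻¹ := by
      have := hδpos k; linarith
    have key := denom_lower (lam.restrict (Th k)) hres hF (hδpos k) hlt hω
    filter_upwards [key] with n hn
    exact hn.trans (lintegral_mono' Measure.restrict_le_self le_rfl)
  have hB' : ∀ᵐ ω ∂P, Filter.atTop.limsup (fun n : ℕ =>
      (((n : ℝ)⁻¹ : ℝ) : EReal) * ENNReal.log (∫⁻ θ in B, g θ n ω / gs n ω ∂lam)) < 0 := hB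
  filter_upwards [hB', ae_all_iff.mpr hdenom, ae_all_iff.mpr hgspos] with ω hBω hdω hgsω
  obtain ⟨c, hc, hU⟩ := exists_exp_upper hBω
  obtain ⟨k, hk⟩ : ∃ k : ℕ, 2 * ((k:ℝ)+1)⁻¹ < -c := by
    obtain ⟨k, hk⟩ := exists_nat_gt (2 / (-c))
    have hc' : (0:ℝ) < -c := neg_pos.mpr hc
    have hk2 : 2 < ((k:ℝ)+1) * (-c) := by
      have := (div_lt_iff₀ hc').mp hk
      nlinarith
    have hk1 : (0:ℝ) < (k:ℝ)+1 := by positivity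
    refine ⟨k, ?_⟩
    calc 2 * ((k:ℝ)+1)⁻¹ < (((k:ℝ)+1) * (-c)) * ((k:ℝ)+1)⁻¹ :=
          mul_lt_mul_of_pos_right hk2 (by positivity)
      _ = -c := by field_simp
  set d : ℝ := 2 * ((k:ℝ)+1)⁻¹ with hddef
  set r := ENNReal.ofReal (Real.exp (c + d)) with hrdef
  have hr1 : r < 1 := by
    rw [hrdef]
    have hcd : c + d < 0 := by rw [hddef]; linarith
    calc ENNReal.ofReal (Real.exp (c + d)) < ENNReal.ofReal 1 := by
          rw [ENNReal.ofReal_lt_ofReal_iff (by norm_num)]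
          exact Real.exp_lt_one_iff.mpr hcd
      _ = 1 := ENNReal.ofReal_one
  have hbound : ∀ᶠ n : ℕ in atTop, postMass lam g n B ω ≤ r ^ n := by
    filter_upwards [hU, hdω k] with n hUn hDn
    have hgsne : gs n ω ≠ ⊤ := by
      intro htop
      rw [htop] at hDn
      simp only [ENNReal.div_top] at hDn
      rw [lintegral_zero] at hDn
      exact (ENNReal.ofReal_pos.mpr (Real.exp_pos _)).ne' (le_zero_iff.mp hDn)
    have hgs0 : gs n ω ≠ 0 := (hgsω n).ne'
    set t := (gs n ω)⁻¹ with htdef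
    have ht0 : t ≠ 0 := ENNReal.inv_ne_zero.mpr hgsne
    have htt : t ≠ ⊤ := ENNReal.inv_ne_top.mpr hgs0
    have hmeasg : Measurable fun θ => g θ n ω := (hg n).comp measurable_prodMk_right
    have hnum : ∫⁻ θ in B, g θ n ω / gs n ω ∂lam = (∫⁻ θ in B, g θ n ω ∂lam) * t := by
      simp_rw [div_eq_mul_inv]
      exact lintegral_mul_const t hmeasg
    have hden : ∫⁻ θ, g θ n ω / gs n ω ∂lam = (∫⁻ θ, g θ n ω ∂lam) * t := by
      simp_rw [div_eq_mul_inv]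
      exact lintegral_mul_const t hmeasg
    have hpost : (∫⁻ θ in B, g θ n ω / gs n ω ∂lam) / (∫⁻ θ, g θ n ω / gs n ω ∂lam)
        = postMass lam g n B ω := by
      rw [hnum, hden, ENNReal.mul_div_mul_right _ _ ht0 htt]
      rfl
    rw [← hpost]
    calc (∫⁻ θ in B, g θ n ω / gs n ω ∂lam) / (∫⁻ θ, g θ n ω / gs n ω ∂lam)
        ≤ ENNReal.ofReal (Real.exp (c * n)) / ENNReal.ofReal (Real.exp (-d * n)) :=
          ENNReal.div_le_div hUn hDn
      _ = ENNReal.ofReal (Real.exp (c * n) / Real.exp (-d * n)) := by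
          rw [ENNReal.ofReal_div_of_pos (Real.exp_pos _)]
      _ = ENNReal.ofReal (Real.exp ((c + d) * n)) := by
          have harg : c * (n:ℝ) - -d * (n:ℝ) = (c + d) * n := by ring
          rw [← Real.exp_sub, harg]
      _ = r ^ n := by
          rw [hrdef, mul_comm (c + d) (n:ℝ), Real.exp_nat_mul,
            ENNReal.ofReal_pow (Real.exp_nonneg _)]
  have htend : Tendsto (fun n : ℕ => r ^ n) atTop (nhds 0) :=
    ENNReal.tendsto_pow_atTop_nhds_zero_of_lt_one hr1
  exact tendsto_of_tendsto_of_tendsto_of_le_of_le' tendsto_const_nhds htend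
    (Eventually.of_forall fun n => zero_le) hbound

/-- Under the information-denseness condition, the posterior mass of any
approximately `P`-remote set converges to `0`, `P`-almost surely. -/
theorem posterior_mass_tendsto_zero {Ω Θ : Type*} {mΩ : MeasurableSpace Ω}
    {mΘ : MeasurableSpace Θ}
    (P : Measure Ω) [IsProbabilityMeasure P]
    (lam : Measure Θ) [SigmaFinite lam] (hlam : lam ≠ 0)
    (g : Θ → ℕ → Ω → ℝ≥0∞) (gs : ℕ → Ω → ℝ≥0∞)
    (hg : ∀ n, Measurable fun p : Θ × Ω => g p.1 n p.2)
    (hgs : ∀ n, Measurable (gs n))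
    (hgspos : ∀ n, ∀ᵐ ω ∂P, 0 < gs n ω)
    (hdense : ∀ δ : ℝ, 0 < δ → ∃ Θδ : Set Θ, MeasurableSet Θδ ∧ 0 < lam Θδ ∧
      ∀ θ ∈ Θδ, ∀ᵐ ω ∂P,
        ((-δ : ℝ) : EReal) ≤ Filter.atTop.liminf fun n : ℕ =>
          (((n : ℝ)⁻¹ : ℝ) : EReal) * ENNReal.log (g θ n ω / gs n ω))
    (A : Set Θ) (hA : MeasurableSet A)
    (hAR : ApproxPRemote P lam g gs A) :
    ∀ᵐ ω ∂P, Tendsto (fun n => postMass lam g n A ω) atTop (nhds 0) := by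
  have h := fun j : ℕ => hAR (((j:ℝ)+1)⁻¹) (by positivity)
  choose K hKm hKrem hKc using h
  have heng : ∀ j : ℕ, ∀ᵐ ω ∂P,
      Tendsto (fun n => postMass lam g n (A ∩ K j) ω) atTop (nhds 0) :=
    fun j => premote_post_tendsto_zero P lam g gs hg hgs hgspos hdense (A ∩ K j) (hKrem j)
  filter_upwards [ae_all_iff.mpr heng, ae_all_iff.mpr hKc] with ω hω1 hω2
  have hsub : ∀ (j n : ℕ), postMass lam g n A ω ≤
      postMass lam g n (A ∩ K j) ω + postMass lam g n (K j)ᶜ ω := by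
    intro j n
    have hA' : A ⊆ (A ∩ K j) ∪ (K j)ᶜ := by
      intro x hx
      by_cases h : x ∈ K j
      · exact Or.inl ⟨hx, h⟩
      · exact Or.inr h
    calc postMass lam g n A ω = (∫⁻ θ in A, g θ n ω ∂lam) / ∫⁻ θ, g θ n ω ∂lam := rfl
      _ ≤ ((∫⁻ θ in A ∩ K j, g θ n ω ∂lam) + ∫⁻ θ in (K j)ᶜ, g θ n ω ∂lam)
            / ∫⁻ θ, g θ n ω ∂lam := by
          apply ENNReal.div_le_div_right
          exact le_trans (lintegral_mono_set hA') (lintegral_union_le _ _ _)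
      _ = _ := by rw [ENNReal.add_div]; rfl
  have hlimsup : atTop.limsup (fun n => postMass lam g n A ω) ≤ 0 := by
    have hbd : ∀ j : ℕ, atTop.limsup (fun n => postMass lam g n A ω) ≤
        ENNReal.ofReal (((j:ℝ)+1)⁻¹) +
          (ENNReal.ofReal (((j:ℝ)+1)⁻¹) + ENNReal.ofReal (((j:ℝ)+1)⁻¹)) := by
      intro j
      set ε := ENNReal.ofReal (((j:ℝ)+1)⁻¹) with hε
      have hε0 : (0:ℝ≥0∞) < ε := ENNReal.ofReal_pos.mpr (by positivity)
      have hεt : ε ≠ ⊤ := ENNReal.ofReal_ne_top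
      have h1 : ∀ᶠ n in atTop, postMass lam g n (A ∩ K j) ω < ε :=
        (hω1 j).eventually_lt_const hε0
      have h2 : ∀ᶠ n in atTop, postMass lam g n (K j)ᶜ ω < ε + ε :=
        eventually_lt_of_limsup_lt (lt_of_le_of_lt (hω2 j) (ENNReal.lt_add_right hεt hε0.ne'))
      have hev : ∀ᶠ n in atTop, postMass lam g n A ω ≤ ε + (ε + ε) := by
        filter_upwards [h1, h2] with n h1n h2n
        exact le_trans (hsub j n) (add_le_add h1n.le h2n.le)
      exact limsup_le_of_le (h := hev)
    have htendB : Tendsto (fun j : ℕ => ENNReal.ofReal (((j:ℝ)+1)⁻¹) +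
        (ENNReal.ofReal (((j:ℝ)+1)⁻¹) + ENNReal.ofReal (((j:ℝ)+1)⁻¹))) atTop (nhds 0) := by
      have h0 : Tendsto (fun j : ℕ => ENNReal.ofReal (((j:ℝ)+1)⁻¹)) atTop (nhds 0) := by
        have hre : Tendsto (fun j : ℕ => ((j:ℝ)+1)⁻¹) atTop (nhds 0) := by
          simpa [one_div] using tendsto_one_div_add_atTop_nhds_zero_nat (𝕜 := ℝ)
        have := (ENNReal.continuous_ofReal.tendsto 0).comp hre
        simpa [Function.comp_def] using this
      simpa using h0.add (h0.add h0)
    exact ge_of_tendsto' htendB hbd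
  refine tendsto_of_le_liminf_of_limsup_le zero_le hlimsup
end

section
/- Under the setup of the AMLE equivalence, if additionally λ(K) < ∞ and either assertion holds, then for every closed set A not containing θ*, the set A ∩ K is P-remote: limsup_n n⁻¹ log ∫_{A∩K} λ(dθ) g_{θ,n}/g*ₙ < 0, P-a.s. -/
open MeasureTheory Filter
open scoped ENNReal

private lemma coe_mul_iSup_le' {ι : Sort*} {c : ℝ} (hc : 0 < c) (f : ι → EReal) :
    (c : EReal) * (⨆ i, f i) ≤ ⨆ i, (c : EReal) * f i := by
  have key : (⨆ i, f i) ≤ ((c⁻¹ : ℝ) : EReal) * ⨆ i, (c : EReal) * f i := by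
    refine iSup_le fun i => ?_
    have : f i = ((c⁻¹ : ℝ) : EReal) * ((c : EReal) * f i) := by
      rw [← mul_assoc, ← EReal.coe_mul, inv_mul_cancel₀ hc.ne', EReal.coe_one, one_mul]
    rw [this]
    exact mul_le_mul_of_nonneg_left (le_iSup (fun i => (c : EReal) * f i) i)
      (by exact_mod_cast (inv_pos.2 hc).le)
  calc (c : EReal) * (⨆ i, f i)
      ≤ (c : EReal) * (((c⁻¹ : ℝ) : EReal) * ⨆ i, (c : EReal) * f i) :=
        mul_le_mul_of_nonneg_left key (by exact_mod_cast hc.le)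
    _ = ⨆ i, (c : EReal) * f i := by
        rw [← mul_assoc, ← EReal.coe_mul, mul_inv_cancel₀ hc.ne', EReal.coe_one, one_mul]

private lemma coe_mul_add_coe_le {c : ℝ} (hc : 0 ≤ c) (x : EReal) (r : ℝ) :
    (c : EReal) * (x + (r : EReal)) ≤ (c : EReal) * x + (c : EReal) * (r : EReal) := by
  rcases eq_or_lt_of_le hc with h0 | h0
  · simp [← h0]
  induction x with
  | bot => simp [EReal.bot_add, EReal.coe_mul_bot_of_pos h0]
  | coe y =>
      rw [← EReal.coe_add, ← EReal.coe_mul, ← EReal.coe_mul, ← EReal.coe_mul, ← EReal.coe_add,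
        mul_add]
  | top =>
      rw [EReal.top_add_of_ne_bot (EReal.coe_ne_bot r), EReal.coe_mul_top_of_pos h0,
        ← EReal.coe_mul, EReal.top_add_of_ne_bot (EReal.coe_ne_bot _)]

noncomputable def logIso' : ℝ≥0∞ ≃o EReal :=
  StrictMono.orderIsoOfSurjective _ ENNReal.log_strictMono ENNReal.log_surjective

private lemma log_iSup' {ι : Sort*} (f : ι → ℝ≥0∞) :
    ENNReal.log (⨆ i, f i) = ⨆ i, ENNReal.log (f i) := OrderIso.map_iSup logIso' f

/-- Under the setup of the AMLE equivalence (compact `K ∋ θ*`, merging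
property, and the equivalent assertion `(ii)` that the likelihood ratio is uniformly
exponentially small on `A ∩ K` for closed `A ∌ θ*`), if moreover `λ(K) < ∞`, then for every
closed set `A` not containing `θ*` the set `A ∩ K` is `P`-remote:
`limsup_n n⁻¹ log ∫_{A∩K} λ(dθ) g_{θ,n}/g*ₙ < 0` `P`-a.s. -/
theorem amle_implies_premote {Ω Θ : Type*} {mΩ : MeasurableSpace Ω}
    [MetricSpace Θ] [MeasurableSpace Θ] [BorelSpace Θ]
    (P : Measure Ω) [IsProbabilityMeasure P]
    (lam : Measure Θ) [SigmaFinite lam]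
    (g : Θ → ℕ → Ω → ℝ≥0∞) (gs : ℕ → Ω → ℝ≥0∞)
    (hg : ∀ n, Measurable fun p : Θ × Ω => g p.1 n p.2)
    (K : Set Θ) (hK : IsCompact K) (θs : Θ) (hθs : θs ∈ K)
    (hKfin : lam K < ⊤)
    (hmerge : ∀ᵐ ω ∂P, Tendsto (fun n : ℕ =>
      (((n : ℝ)⁻¹ : ℝ) : EReal) * ENNReal.log (g θs n ω / gs n ω)) atTop (nhds 0))
    (hii : ∀ A : Set Θ, IsClosed A → θs ∉ A →
      ∀ᵐ ω ∂P, Filter.atTop.limsup (fun n : ℕ =>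
        ⨆ θ ∈ A ∩ K,
          (((n : ℝ)⁻¹ : ℝ) : EReal) * ENNReal.log (g θ n ω / gs n ω)) < 0) :
    ∀ A : Set Θ, IsClosed A → θs ∉ A →
      ∀ᵐ ω ∂P, Filter.atTop.limsup (fun n : ℕ =>
        (((n : ℝ)⁻¹ : ℝ) : EReal) *
          ENNReal.log (∫⁻ θ in A ∩ K, g θ n ω / gs n ω ∂lam)) < 0 := by
  intro A hA hAs
  rcases eq_or_ne (lam (A ∩ K)) 0 with hz | hz
  · refine Eventually.of_forall fun ω => ?_
    have hbot : ∀ᶠ n : ℕ in atTop,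
        (((n : ℝ)⁻¹ : ℝ) : EReal) *
          ENNReal.log (∫⁻ θ in A ∩ K, g θ n ω / gs n ω ∂lam) ≤ (⊥ : EReal) := by
      filter_upwards [eventually_ge_atTop 1] with n hn
      have h0 : (∫⁻ θ in A ∩ K, g θ n ω / gs n ω ∂lam) = 0 := by
        rw [Measure.restrict_eq_zero.mpr hz, lintegral_zero_measure]
      have hcpos : (0 : ℝ) < (n : ℝ)⁻¹ :=
        inv_pos.2 (by exact_mod_cast Nat.lt_of_lt_of_le Nat.zero_lt_one hn)
      rw [h0, ENNReal.log_zero, EReal.coe_mul_bot_of_pos hcpos]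
    have hle := limsup_le_of_le (f := atTop) (by isBoundedDefault) hbot
    exact lt_of_le_of_lt hle (by simp)
  · have hsfin : lam (A ∩ K) ≠ ⊤ :=
      (lt_of_le_of_lt (measure_mono Set.inter_subset_right) hKfin).ne
    set l : ℝ := Real.log (lam (A ∩ K)).toReal with hl
    have hlog : ENNReal.log (lam (A ∩ K)) = (l : EReal) := ENNReal.log_pos_real hz hsfin
    filter_upwards [hii A hA hAs] with ω hω
    set S : ℕ → EReal := fun n : ℕ =>
      ⨆ θ ∈ A ∩ K, (((n : ℝ)⁻¹ : ℝ) : EReal) * ENNReal.log (g θ n ω / gs n ω) with hS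
    set v : ℕ → EReal := fun n : ℕ => (((n : ℝ)⁻¹ * l : ℝ) : EReal) with hv
    have hvlim : Tendsto v atTop (nhds (0 : EReal)) := by
      have h1 : Tendsto (fun n : ℕ => (n : ℝ)⁻¹ * l) atTop (nhds 0) := by
        have h2 : Tendsto (fun n : ℕ => ((n : ℝ))⁻¹) atTop (nhds (0 : ℝ)) :=
          tendsto_inv_atTop_nhds_zero_nat
        simpa using h2.mul_const l
      have := EReal.tendsto_coe.2 h1
      simpa [hv] using this
    have hvls : limsup v atTop = 0 := hvlim.limsup_eq
    have hev : ∀ᶠ n : ℕ in atTop,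
        (((n : ℝ)⁻¹ : ℝ) : EReal) *
          ENNReal.log (∫⁻ θ in A ∩ K, g θ n ω / gs n ω ∂lam) ≤ S n + v n := by
      filter_upwards [eventually_ge_atTop 1] with n hn
      have hcpos : (0 : ℝ) < (n : ℝ)⁻¹ :=
        inv_pos.2 (by exact_mod_cast Nat.lt_of_lt_of_le Nat.zero_lt_one hn)
      set M : ℝ≥0∞ := ⨆ θ ∈ A ∩ K, g θ n ω / gs n ω with hM
      have hint : (∫⁻ θ in A ∩ K, g θ n ω / gs n ω ∂lam) ≤ M * lam (A ∩ K) := by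
        calc (∫⁻ θ in A ∩ K, g θ n ω / gs n ω ∂lam)
            ≤ ∫⁻ _ in A ∩ K, M ∂lam :=
              setLIntegral_mono measurable_const fun θ hθ =>
                le_biSup (fun θ => g θ n ω / gs n ω) hθ
          _ = M * lam (A ∩ K) := setLIntegral_const _ _
      have h1 : ENNReal.log (∫⁻ θ in A ∩ K, g θ n ω / gs n ω ∂lam) ≤
          ENNReal.log M + (l : EReal) := by
        rw [← hlog, ← ENNReal.log_mul_add]
        exact ENNReal.log_monotone hint
      have h2 : (((n : ℝ)⁻¹ : ℝ) : EReal) * ENNReal.log M ≤ S n := by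
        have hEq : ENNReal.log M = ⨆ θ ∈ A ∩ K, ENNReal.log (g θ n ω / gs n ω) := by
          rw [hM, log_iSup']
          exact iSup_congr fun θ => log_iSup' _
        rw [hEq, hS]
        refine le_trans (coe_mul_iSup_le' hcpos _) (iSup_mono fun θ => ?_)
        exact coe_mul_iSup_le' hcpos _
      calc (((n : ℝ)⁻¹ : ℝ) : EReal) *
            ENNReal.log (∫⁻ θ in A ∩ K, g θ n ω / gs n ω ∂lam)
          ≤ (((n : ℝ)⁻¹ : ℝ) : EReal) * (ENNReal.log M + (l : EReal)) :=
            mul_le_mul_of_nonneg_left h1 (by exact_mod_cast hcpos.le)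
        _ ≤ (((n : ℝ)⁻¹ : ℝ) : EReal) * ENNReal.log M +
              (((n : ℝ)⁻¹ : ℝ) : EReal) * (l : EReal) :=
            coe_mul_add_coe_le hcpos.le _ _
        _ ≤ S n + v n := by
            refine add_le_add h2 ?_
            rw [hv, ← EReal.coe_mul]
    have hmain : limsup (fun n : ℕ =>
        (((n : ℝ)⁻¹ : ℝ) : EReal) *
          ENNReal.log (∫⁻ θ in A ∩ K, g θ n ω / gs n ω ∂lam)) atTop ≤
        limsup S atTop + limsup v atTop := by
      refine le_trans (limsup_le_limsup hev) ?_
      exact EReal.limsup_add_le (Or.inr (by rw [hvls]; simp)) (Or.inr (by rw [hvls]; simp))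
    rw [hvls, add_zero] at hmain
    exact lt_of_le_of_lt hmain hω
end

section
/- In the stochastic volatility model with transition density q_θ(x₁,x₂) = (2πσ²)^{-1/2} exp(−(x₂−φx₁)²/(2σ²)) and emission density g_θ as above, for every x₀ and y₁, y₂ ≠ 0, the two-step integrated density D_{θ,x₀}(y_{0:2}) = ∬ q_θ(x₀,x₁) g_θ(x₁,y₁) q_θ(x₁,x₂) g_θ(x₂,y₂) dx₁ dx₂ satisfies both bounds: D ≤ 1/(|y₁||y₂|√(2πσ²)√(2πe)) and D ≤ (e^{σ²/8}/(2πβ^{1−φ})) · ((1+φ)e^{−1}/y₁²)^{(1+φ)/2}. -/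
open MeasureTheory Filter

/-- Emission density of the stochastic volatility model. -/
noncomputable def svg (β x y : ℝ) : ℝ :=
  (Real.sqrt (2 * Real.pi * β ^ 2))⁻¹ *
    Real.exp (-x / 2 - y ^ 2 * Real.exp (-x) / (2 * β ^ 2))

/-- Transition density of the stochastic volatility model:
`q_θ(x₁,x₂) = (2πσ²)^{-1/2} exp(−(x₂ − φx₁)²/(2σ²))`. -/
noncomputable def svq (σ φ x₁ x₂ : ℝ) : ℝ :=
  (Real.sqrt (2 * Real.pi * σ ^ 2))⁻¹ *
    Real.exp (-(x₂ - φ * x₁) ^ 2 / (2 * σ ^ 2))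

section Helpers
open Real Set

lemma gauss_exp (s : ℝ) (hs : 0 < s) (m x : ℝ) :
    Real.exp (-(x - m)^2 / (2*s^2)) = Real.exp (-(1/(2*s^2)) * (x-m)^2) := by
  congr 1; field_simp

lemma gauss_integrable (s : ℝ) (hs : 0 < s) (m : ℝ) :
    Integrable (fun x => Real.exp (-(x - m)^2 / (2*s^2))) := by
  have h := (integrable_exp_neg_mul_sq (b := 1/(2*s^2)) (by positivity)).comp_sub_right m
  refine h.congr ?_
  filter_upwards with x
  rw [gauss_exp s hs]

lemma gauss_integral (s : ℝ) (hs : 0 < s) (m : ℝ) :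
    ∫ x, Real.exp (-(x - m)^2 / (2*s^2)) = Real.sqrt (2 * Real.pi * s^2) := by
  simp_rw [gauss_exp s hs]
  have h1 : ∫ x, Real.exp (-(1/(2*s^2)) * (x-m)^2) = ∫ x, Real.exp (-(1/(2*s^2)) * x^2) := by
    exact MeasureTheory.integral_sub_right_eq_self (μ := volume)
      (fun y => Real.exp (-(1/(2*s^2)) * y^2)) m
  rw [h1, integral_gaussian]
  congr 1
  field_simp

lemma exp_log_bound (a c x : ℝ) (ha : 0 < a) (hc : 0 < c) :
    Real.exp (-(c*x) - a * Real.exp (-x)) ≤ (c / (a * Real.exp 1)) ^ c := by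
  rw [Real.rpow_def_of_pos (by positivity), Real.exp_le_exp]
  have h1 : Real.log (a * Real.exp (-x) / c) = Real.log a + (-x) - Real.log c := by
    rw [Real.log_div (by positivity) hc.ne', Real.log_mul ha.ne' (Real.exp_pos _).ne',
      Real.log_exp]
  have h2 : Real.log (c / (a * Real.exp 1)) = Real.log c - (Real.log a + 1) := by
    rw [Real.log_div hc.ne' (by positivity), Real.log_mul ha.ne' (Real.exp_pos _).ne',
      Real.log_exp]
  have h3 := Real.log_le_sub_one_of_pos (show 0 < a * Real.exp (-x) / c by positivity)
  rw [h1] at h3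
  rw [h2]
  have h4 : c * (a * Real.exp (-x) / c) = a * Real.exp (-x) := by field_simp
  nlinarith [mul_le_mul_of_nonneg_left h3 hc.le]

lemma svq_nonneg (σ φ a b : ℝ) : 0 ≤ svq σ φ a b :=
  mul_nonneg (inv_nonneg.mpr (Real.sqrt_nonneg _)) (Real.exp_pos _).le

lemma svg_nonneg (β x y : ℝ) : 0 ≤ svg β x y :=
  mul_nonneg (inv_nonneg.mpr (Real.sqrt_nonneg _)) (Real.exp_pos _).le

lemma svq_le (σ φ : ℝ) (hσ : 0 < σ) (a b : ℝ) :
    svq σ φ a b ≤ (Real.sqrt (2 * Real.pi * σ ^ 2))⁻¹ := by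
  rw [svq]
  have hz : -(b - φ*a)^2/(2*σ^2) ≤ 0 :=
    div_nonpos_of_nonpos_of_nonneg (neg_nonpos.mpr (sq_nonneg _)) (by positivity)
  calc (Real.sqrt (2 * Real.pi * σ ^ 2))⁻¹ * Real.exp (-(b - φ * a) ^ 2 / (2 * σ ^ 2))
      ≤ (Real.sqrt (2 * Real.pi * σ ^ 2))⁻¹ * 1 := by
        apply mul_le_mul_of_nonneg_left _ (inv_nonneg.mpr (Real.sqrt_nonneg _))
        exact Real.exp_le_one_iff.mpr hz
    _ = (Real.sqrt (2 * Real.pi * σ ^ 2))⁻¹ := mul_one _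

lemma svq_integrable (σ φ : ℝ) (hσ : 0 < σ) (x : ℝ) :
    Integrable (fun t => svq σ φ x t) := by
  unfold svq
  exact (gauss_integrable σ hσ (φ*x)).const_mul _

lemma svq_integral (σ φ : ℝ) (hσ : 0 < σ) (x : ℝ) : ∫ t, svq σ φ x t = 1 := by
  unfold svq
  rw [MeasureTheory.integral_const_mul, gauss_integral σ hσ (φ*x)]
  exact inv_mul_cancel₀ (Real.sqrt_pos.mpr (by positivity)).ne'

/-! Change of variables for `∫ x, svg β x y = 1/|y|`. -/

noncomputable def fcov (x : ℝ) : ℝ := Real.exp (-(x/2))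
noncomputable def fcov' (x : ℝ) : ℝ := Real.exp (-(x/2)) * (-(1/2))
noncomputable def Gcov (β y u : ℝ) : ℝ := Real.exp (-(y^2/(2*β^2)) * u^2)

lemma fcov_deriv (x : ℝ) : HasDerivAt fcov (fcov' x) x := by
  have h1 : HasDerivAt (fun x : ℝ => -(x/2)) (-(1/2)) x := by
    exact ((hasDerivAt_id x).div_const 2).neg
  exact (Real.hasDerivAt_exp (-(x/2))).comp x h1

lemma fcov_inj : Function.Injective fcov := by
  intro a b h
  have := Real.exp_injective h
  linarith

lemma fcov_range : fcov '' univ = Ioi 0 := by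
  rw [Set.image_univ]
  have h : Set.range fcov = Set.range Real.exp := by
    apply Set.Subset.antisymm
    · rintro _ ⟨x, rfl⟩; exact ⟨-(x/2), rfl⟩
    · rintro _ ⟨x, rfl⟩; exact ⟨-(2*x), by simp [fcov]; ring_nf⟩
  rw [h, Real.range_exp]

lemma svg_eq (β y : ℝ) (hβ : 0 < β) (x : ℝ) :
    svg β x y = (Real.sqrt (2 * Real.pi * β ^ 2))⁻¹ * 2 * (|fcov' x| • Gcov β y (fcov x)) := by
  have h2 : Real.exp (-(x/2)) ^ 2 = Real.exp (-x) := by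
    rw [sq, ← Real.exp_add]; ring_nf
  have habs : |fcov' x| = Real.exp (-(x/2)) * (1/2) := by
    rw [fcov', abs_mul, abs_of_pos (Real.exp_pos _)]; norm_num
  rw [svg, smul_eq_mul, habs, Gcov, fcov, h2]
  have h3 : Real.exp (-x / 2 - y ^ 2 * Real.exp (-x) / (2 * β ^ 2))
      = Real.exp (-(x/2)) * Real.exp (-(y^2/(2*β^2)) * Real.exp (-x)) := by
    rw [← Real.exp_add]; congr 1; field_simp; ring
  rw [h3]; ring

lemma svg_int_aux (β y : ℝ) (hβ : 0 < β) (hy : y ≠ 0) :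
    (Integrable (fun x => svg β x y)) ∧ (∫ x, svg β x y) = 1 / |y| := by
  have hb : 0 < y^2/(2*β^2) := by positivity
  have hG : IntegrableOn (Gcov β y) (Ioi 0) :=
    (integrable_exp_neg_mul_sq hb).integrableOn
  have hderiv : ∀ x ∈ (univ : Set ℝ), HasDerivWithinAt fcov (fcov' x) univ x :=
    fun x _ => (fcov_deriv x).hasDerivWithinAt
  have hkey := MeasureTheory.integral_image_eq_integral_abs_deriv_smul MeasurableSet.univ
    hderiv (fcov_inj.injOn) (Gcov β y)
  have hint := (MeasureTheory.integrableOn_image_iff_integrableOn_abs_deriv_smul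
    MeasurableSet.univ hderiv (fcov_inj.injOn) (Gcov β y)).mp (by rwa [fcov_range])
  rw [fcov_range] at hkey
  rw [integrableOn_univ] at hint
  have hIsvg : Integrable (fun x => svg β x y) := by
    have := (hint.const_mul ((Real.sqrt (2 * Real.pi * β ^ 2))⁻¹ * 2))
    exact this.congr (by filter_upwards with x; rw [svg_eq β y hβ x])
  refine ⟨hIsvg, ?_⟩
  have hIoi : ∫ u in Ioi 0, Gcov β y u = Real.sqrt (Real.pi / (y^2/(2*β^2))) / 2 :=
    integral_gaussian_Ioi _
  have hsq : Real.sqrt (Real.pi / (y^2/(2*β^2))) = Real.sqrt (2 * Real.pi * β ^ 2) / |y| := by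
    rw [show Real.pi / (y^2/(2*β^2)) = (2 * Real.pi * β ^ 2) / y^2 by field_simp,
      Real.sqrt_div (by positivity), Real.sqrt_sq_eq_abs]
  have hsqrt_pos : 0 < Real.sqrt (2 * Real.pi * β ^ 2) :=
    Real.sqrt_pos.mpr (by positivity)
  calc ∫ x, svg β x y
      = ∫ x, (Real.sqrt (2 * Real.pi * β ^ 2))⁻¹ * 2 * (|fcov' x| • Gcov β y (fcov x)) := by
        congr 1; funext x; exact svg_eq β y hβ x
    _ = (Real.sqrt (2 * Real.pi * β ^ 2))⁻¹ * 2 * ∫ x, |fcov' x| • Gcov β y (fcov x) :=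
        integral_const_mul _ _
    _ = (Real.sqrt (2 * Real.pi * β ^ 2))⁻¹ * 2 * ∫ u in Ioi 0, Gcov β y u := by
        rw [hkey, MeasureTheory.setIntegral_univ]
    _ = 1 / |y| := by
        rw [hIoi, hsq]
        field_simp
        try ring

/-- The sup bound `svg β x y ≤ 1/(|y| √(2πe))`. -/
lemma svg_le (β y : ℝ) (hβ : 0 < β) (hy : y ≠ 0) (x : ℝ) :
    svg β x y ≤ 1 / (|y| * Real.sqrt (2 * Real.pi * Real.exp 1)) := by
  have key := exp_log_bound (y^2/(2*β^2)) (1/2) x (by positivity) one_half_pos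
  rw [← Real.sqrt_eq_rpow] at key
  have hbase : (1:ℝ)/2 / (y^2/(2*β^2) * Real.exp 1) = β^2 / (y^2 * Real.exp 1) := by
    field_simp
    try ring
  rw [hbase] at key
  have hsq : Real.sqrt (β^2 / (y^2 * Real.exp 1)) = β / (|y| * Real.sqrt (Real.exp 1)) := by
    rw [Real.sqrt_div (by positivity), Real.sqrt_sq hβ.le,
      Real.sqrt_mul (by positivity), Real.sqrt_sq_eq_abs]
  rw [hsq] at key
  have hexp : -x / 2 - y ^ 2 * Real.exp (-x) / (2 * β ^ 2)
      = -((1/2)*x) - (y^2/(2*β^2)) * Real.exp (-x) := by ring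
  have hle : svg β x y ≤ (Real.sqrt (2 * Real.pi * β ^ 2))⁻¹ *
      (β / (|y| * Real.sqrt (Real.exp 1))) := by
    rw [svg, hexp]
    exact mul_le_mul_of_nonneg_left key (inv_nonneg.mpr (Real.sqrt_nonneg _))
  refine hle.trans (le_of_eq ?_)
  rw [Real.sqrt_mul (by positivity) (β^2), Real.sqrt_sq hβ.le,
    Real.sqrt_mul (by positivity) (Real.exp 1)]
  have h1 : Real.sqrt (2*Real.pi) ≠ 0 := (Real.sqrt_pos.mpr (by positivity)).ne'
  have h2 : Real.sqrt (Real.exp 1) ≠ 0 := (Real.sqrt_pos.mpr (Real.exp_pos 1)).ne'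
  have h3 : |y| ≠ 0 := abs_ne_zero.mpr hy
  field_simp

/-- Weighted sup bound for the second estimate. -/
lemma svg_weighted_le (β φ y : ℝ) (hβ : 0 < β) (hy : y ≠ 0) (hφ1 : 0 < 1 + φ) (x : ℝ) :
    svg β x y * Real.exp (-(φ * x)/2) ≤ (Real.sqrt (2 * Real.pi * β ^ 2))⁻¹ *
      (((1+φ)/2) / ((y^2/(2*β^2)) * Real.exp 1)) ^ (((1+φ)/2 : ℝ)) := by
  have key := exp_log_bound (y^2/(2*β^2)) ((1+φ)/2) x (by positivity) (by linarith)
  have hexp : svg β x y * Real.exp (-(φ * x)/2) = (Real.sqrt (2 * Real.pi * β ^ 2))⁻¹ *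
      Real.exp (-(((1+φ)/2)*x) - (y^2/(2*β^2)) * Real.exp (-x)) := by
    rw [svg, mul_assoc, ← Real.exp_add]
    congr 2
    ring
  rw [hexp]
  exact mul_le_mul_of_nonneg_left key (inv_nonneg.mpr (Real.sqrt_nonneg _))

/-- Completing the square: `∫ exp(−(x−μ)²/(2σ²) − x/2) = √(2πσ²) e^{−μ/2+σ²/8}`. -/
lemma csq_exp (σ μ x : ℝ) (hσ : 0 < σ) :
    Real.exp (-(x - μ)^2/(2*σ^2) - x/2)
      = Real.exp (-(x - (μ - σ^2/2))^2/(2*σ^2)) * Real.exp (-μ/2 + σ^2/8) := by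
  rw [← Real.exp_add]
  congr 1
  field_simp
  ring

lemma csq_integrable (σ : ℝ) (hσ : 0 < σ) (μ : ℝ) :
    Integrable (fun x => Real.exp (-(x - μ)^2/(2*σ^2) - x/2)) := by
  have h := (gauss_integrable σ hσ (μ - σ^2/2)).mul_const (Real.exp (-μ/2 + σ^2/8))
  exact h.congr (by filter_upwards with x; rw [csq_exp σ μ x hσ])

lemma csq_integral (σ : ℝ) (hσ : 0 < σ) (μ : ℝ) :
    ∫ x, Real.exp (-(x - μ)^2/(2*σ^2) - x/2)
      = Real.sqrt (2 * Real.pi * σ^2) * Real.exp (-μ/2 + σ^2/8) := by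
  simp_rw [fun x => csq_exp σ μ x hσ]
  rw [MeasureTheory.integral_mul_const, gauss_integral σ hσ]

end Helpers

/-- For the stochastic volatility model with `β, σ > 0`, `|φ| < 1` and
`y₁, y₂ ≠ 0`, the two-step integrated density
`D = ∬ q(x₀,x₁) g(x₁,y₁) q(x₁,x₂) g(x₂,y₂) dx₁ dx₂` satisfies both bounds
`D ≤ 1/(|y₁||y₂|√(2πσ²)√(2πe))` and
`D ≤ (e^{σ²/8}/(2πβ^{1−φ})) ((1+φ)e^{−1}/y₁²)^{(1+φ)/2}`. -/
theorem sv_two_step_bounds (β σ φ x₀ y₁ y₂ : ℝ) (hβ : 0 < β) (hσ : 0 < σ)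
    (hφ : |φ| < 1) (hy₁ : y₁ ≠ 0) (hy₂ : y₂ ≠ 0) :
    (∫ x₁, ∫ x₂, svq σ φ x₀ x₁ * svg β x₁ y₁ * svq σ φ x₁ x₂ * svg β x₂ y₂)
        ≤ 1 / (|y₁| * |y₂| * Real.sqrt (2 * Real.pi * σ ^ 2) *
            Real.sqrt (2 * Real.pi * Real.exp 1)) ∧
    (∫ x₁, ∫ x₂, svq σ φ x₀ x₁ * svg β x₁ y₁ * svq σ φ x₁ x₂ * svg β x₂ y₂)
        ≤ Real.exp (σ ^ 2 / 8) / (2 * Real.pi * β ^ ((1 : ℝ) - φ)) *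
            ((1 + φ) * Real.exp (-1) / y₁ ^ 2) ^ ((1 + φ) / 2) := by
  have hφ1 : 0 < 1 + φ := by have := abs_lt.mp hφ; linarith
  have hQ : 0 < Real.sqrt (2 * Real.pi * σ ^ 2) := Real.sqrt_pos.mpr (by positivity)
  have hB : 0 < Real.sqrt (2 * Real.pi * β ^ 2) := Real.sqrt_pos.mpr (by positivity)
  have hy₁' : |y₁| ≠ 0 := abs_ne_zero.mpr hy₁
  have hy₂' : |y₂| ≠ 0 := abs_ne_zero.mpr hy₂
  have hnn : ∀ x₁ x₂ : ℝ, 0 ≤ svq σ φ x₀ x₁ * svg β x₁ y₁ * svq σ φ x₁ x₂ * svg β x₂ y₂ :=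
    fun x₁ x₂ => mul_nonneg (mul_nonneg (mul_nonneg (svq_nonneg _ _ _ _) (svg_nonneg _ _ _))
      (svq_nonneg _ _ _ _)) (svg_nonneg _ _ _)
  have hinner_nn : (0:ℝ → ℝ) ≤ᵐ[volume]
      fun x₁ => ∫ x₂, svq σ φ x₀ x₁ * svg β x₁ y₁ * svq σ φ x₁ x₂ * svg β x₂ y₂ := by
    filter_upwards with x₁
    exact integral_nonneg (fun x₂ => hnn x₁ x₂)
  constructor
  · -- first bound
    set Mg : ℝ := 1 / (|y₂| * Real.sqrt (2 * Real.pi * Real.exp 1)) with hMg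
    have hMg_nn : 0 ≤ Mg := by positivity
    set K : ℝ := (Real.sqrt (2 * Real.pi * σ ^ 2))⁻¹ * Mg with hK
    have inner1 : ∀ x₁ : ℝ,
        (∫ x₂, svq σ φ x₀ x₁ * svg β x₁ y₁ * svq σ φ x₁ x₂ * svg β x₂ y₂)
          ≤ K * svg β x₁ y₁ := by
      intro x₁
      have step : (∫ x₂, svq σ φ x₀ x₁ * svg β x₁ y₁ * svq σ φ x₁ x₂ * svg β x₂ y₂)
          ≤ ∫ x₂, (svq σ φ x₀ x₁ * svg β x₁ y₁ * Mg) * svq σ φ x₁ x₂ := by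
        apply integral_mono_of_nonneg
        · filter_upwards with x₂; exact hnn x₁ x₂
        · exact (svq_integrable σ φ hσ x₁).const_mul _
        · filter_upwards with x₂
          have h1 : svq σ φ x₀ x₁ * svg β x₁ y₁ * svq σ φ x₁ x₂ * svg β x₂ y₂
              ≤ svq σ φ x₀ x₁ * svg β x₁ y₁ * svq σ φ x₁ x₂ * Mg := by
            apply mul_le_mul_of_nonneg_left (svg_le β y₂ hβ hy₂ x₂)
            exact mul_nonneg (mul_nonneg (svq_nonneg _ _ _ _) (svg_nonneg _ _ _))
              (svq_nonneg _ _ _ _)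
          exact h1.trans (le_of_eq (by ring))
      rw [MeasureTheory.integral_const_mul, svq_integral σ φ hσ x₁, mul_one] at step
      refine step.trans ?_
      have h2 : svq σ φ x₀ x₁ * svg β x₁ y₁ * Mg
          = (svg β x₁ y₁ * Mg) * svq σ φ x₀ x₁ := by ring
      rw [h2]
      have h3 : svg β x₁ y₁ * Mg * svq σ φ x₀ x₁
          ≤ svg β x₁ y₁ * Mg * (Real.sqrt (2 * Real.pi * σ ^ 2))⁻¹ :=
        mul_le_mul_of_nonneg_left (svq_le σ φ hσ x₀ x₁)
          (mul_nonneg (svg_nonneg β x₁ y₁) hMg_nn)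
      refine h3.trans (le_of_eq (by rw [hK]; ring))
    have hdomI : Integrable (fun x₁ => K * svg β x₁ y₁) :=
      ((svg_int_aux β y₁ hβ hy₁).1.const_mul K)
    have step2 := integral_mono_of_nonneg hinner_nn hdomI
      (by filter_upwards with x₁; exact inner1 x₁)
    rw [MeasureTheory.integral_const_mul, (svg_int_aux β y₁ hβ hy₁).2] at step2
    refine step2.trans (le_of_eq ?_)
    rw [hK, hMg]
    have h4 : Real.sqrt (2 * Real.pi * Real.exp 1) ≠ 0 :=
      (Real.sqrt_pos.mpr (by positivity)).ne'
    field_simp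
  · -- second bound
    set M : ℝ := (((1+φ)/2) / ((y₁^2/(2*β^2)) * Real.exp 1)) ^ (((1+φ)/2 : ℝ)) with hM
    have hM_nn : 0 ≤ M := Real.rpow_nonneg (by positivity) _
    set K₂ : ℝ := (Real.sqrt (2 * Real.pi * β ^ 2))⁻¹ * Real.exp (σ^2/8) *
      ((Real.sqrt (2 * Real.pi * β ^ 2))⁻¹ * M) with hK₂
    have inner2 : ∀ x₁ : ℝ,
        (∫ x₂, svq σ φ x₀ x₁ * svg β x₁ y₁ * svq σ φ x₁ x₂ * svg β x₂ y₂)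
          ≤ K₂ * svq σ φ x₀ x₁ := by
      intro x₁
      set C : ℝ := svq σ φ x₀ x₁ * svg β x₁ y₁ *
        ((Real.sqrt (2 * Real.pi * σ ^ 2))⁻¹ * (Real.sqrt (2 * Real.pi * β ^ 2))⁻¹) with hC
      have hC_nn : 0 ≤ C := by
        apply mul_nonneg (mul_nonneg (svq_nonneg _ _ _ _) (svg_nonneg _ _ _))
        positivity
      have step : (∫ x₂, svq σ φ x₀ x₁ * svg β x₁ y₁ * svq σ φ x₁ x₂ * svg β x₂ y₂)
          ≤ ∫ x₂, C * Real.exp (-(x₂ - φ*x₁)^2/(2*σ^2) - x₂/2) := by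
        apply integral_mono_of_nonneg
        · filter_upwards with x₂; exact hnn x₁ x₂
        · exact (csq_integrable σ hσ (φ*x₁)).const_mul _
        · filter_upwards with x₂
          have hpt : svq σ φ x₁ x₂ * svg β x₂ y₂
              ≤ (Real.sqrt (2 * Real.pi * σ ^ 2))⁻¹ * (Real.sqrt (2 * Real.pi * β ^ 2))⁻¹ *
                Real.exp (-(x₂ - φ*x₁)^2/(2*σ^2) - x₂/2) := by
            rw [svq, svg, mul_mul_mul_comm, ← Real.exp_add]
            apply mul_le_mul_of_nonneg_left _
              (mul_nonneg (inv_nonneg.mpr (Real.sqrt_nonneg _))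
                (inv_nonneg.mpr (Real.sqrt_nonneg _)))
            rw [Real.exp_le_exp]
            have h0 : 0 ≤ y₂^2 * Real.exp (-x₂) / (2*β^2) := by positivity
            linarith
          calc svq σ φ x₀ x₁ * svg β x₁ y₁ * svq σ φ x₁ x₂ * svg β x₂ y₂
              = (svq σ φ x₀ x₁ * svg β x₁ y₁) * (svq σ φ x₁ x₂ * svg β x₂ y₂) := by ring
            _ ≤ (svq σ φ x₀ x₁ * svg β x₁ y₁) *
                ((Real.sqrt (2 * Real.pi * σ ^ 2))⁻¹ * (Real.sqrt (2 * Real.pi * β ^ 2))⁻¹ *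
                  Real.exp (-(x₂ - φ*x₁)^2/(2*σ^2) - x₂/2)) :=
                mul_le_mul_of_nonneg_left hpt
                  (mul_nonneg (svq_nonneg _ _ _ _) (svg_nonneg _ _ _))
            _ = C * Real.exp (-(x₂ - φ*x₁)^2/(2*σ^2) - x₂/2) := by rw [hC]; ring
      rw [MeasureTheory.integral_const_mul, csq_integral σ hσ (φ*x₁)] at step
      refine step.trans ?_
      have heq : C * (Real.sqrt (2 * Real.pi * σ^2) * Real.exp (-(φ*x₁)/2 + σ^2/8))
          = svq σ φ x₀ x₁ * (svg β x₁ y₁ * Real.exp (-(φ*x₁)/2)) *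
            ((Real.sqrt (2 * Real.pi * β ^ 2))⁻¹ * Real.exp (σ^2/8)) := by
        rw [hC, show Real.exp (-(φ*x₁)/2 + σ^2/8)
            = Real.exp (-(φ*x₁)/2) * Real.exp (σ^2/8) from Real.exp_add _ _]
        field_simp
      rw [heq]
      have hw := svg_weighted_le β φ y₁ hβ hy₁ hφ1 x₁
      calc svq σ φ x₀ x₁ * (svg β x₁ y₁ * Real.exp (-(φ*x₁)/2)) *
            ((Real.sqrt (2 * Real.pi * β ^ 2))⁻¹ * Real.exp (σ^2/8))
          ≤ svq σ φ x₀ x₁ * ((Real.sqrt (2 * Real.pi * β ^ 2))⁻¹ * M) *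
            ((Real.sqrt (2 * Real.pi * β ^ 2))⁻¹ * Real.exp (σ^2/8)) := by
            apply mul_le_mul_of_nonneg_right _ (by positivity)
            exact mul_le_mul_of_nonneg_left hw (svq_nonneg _ _ _ _)
        _ = K₂ * svq σ φ x₀ x₁ := by rw [hK₂]; ring
    have hdomI : Integrable (fun x₁ => K₂ * svq σ φ x₀ x₁) :=
      ((svq_integrable σ φ hσ x₀).const_mul K₂)
    have step2 := integral_mono_of_nonneg hinner_nn hdomI
      (by filter_upwards with x₁; exact inner2 x₁)
    rw [MeasureTheory.integral_const_mul, svq_integral σ φ hσ x₀, mul_one] at step2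
    refine step2.trans (le_of_eq ?_)
    -- K₂ equals the stated constant
    rw [hK₂, hM]
    have hsq2 : (Real.sqrt (2 * Real.pi * β ^ 2))⁻¹ * (Real.sqrt (2 * Real.pi * β ^ 2))⁻¹
        = (2 * Real.pi * β ^ 2)⁻¹ := by
      rw [← mul_inv, Real.mul_self_sqrt (by positivity)]
    have hbase : ((1+φ)/2) / ((y₁^2/(2*β^2)) * Real.exp 1)
        = ((1 + φ) * Real.exp (-1) / y₁ ^ 2) * β^2 := by
      rw [Real.exp_neg]
      field_simp
    have hrpow : (((1 + φ) * Real.exp (-1) / y₁ ^ 2) * β^2) ^ (((1+φ)/2 : ℝ))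
        = ((1 + φ) * Real.exp (-1) / y₁ ^ 2) ^ (((1+φ)/2 : ℝ)) * β ^ ((1:ℝ) + φ) := by
      rw [Real.mul_rpow (by positivity) (by positivity)]
      congr 1
      rw [show (β^2 : ℝ) = β ^ ((2:ℕ) : ℝ) from (Real.rpow_natCast β 2).symm,
        ← Real.rpow_mul hβ.le]
      congr 1
      push_cast
      ring
    have hβpow : β ^ ((1:ℝ) + φ) * β ^ ((1:ℝ) - φ) = β ^ 2 := by
      rw [← Real.rpow_add hβ, show ((1:ℝ) + φ + ((1:ℝ) - φ)) = ((2:ℕ) : ℝ) by push_cast; ring,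
        Real.rpow_natCast]
    have hβpos : 0 < β ^ ((1:ℝ) - φ) := Real.rpow_pos_of_pos hβ _
    rw [hbase, hrpow]
    set X : ℝ := ((1 + φ) * Real.exp (-1) / y₁ ^ 2) ^ ((1 + φ) / 2) with hX
    rw [show (Real.sqrt (2 * Real.pi * β ^ 2))⁻¹ * Real.exp (σ^2/8) *
        ((Real.sqrt (2 * Real.pi * β ^ 2))⁻¹ * (X * β ^ ((1:ℝ) + φ)))
        = ((Real.sqrt (2 * Real.pi * β ^ 2))⁻¹ * (Real.sqrt (2 * Real.pi * β ^ 2))⁻¹) *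
          (Real.exp (σ^2/8) * X * β ^ ((1:ℝ) + φ)) by ring, hsq2]
    have h5 : 2 * Real.pi * β ^ 2 = (2 * Real.pi * β ^ ((1:ℝ) - φ)) * β ^ ((1:ℝ) + φ) := by
      linear_combination (-(2 * Real.pi)) * hβpow
    rw [h5, mul_inv]
    have h6 : β ^ ((1:ℝ) + φ) ≠ 0 := (Real.rpow_pos_of_pos hβ _).ne'
    have h7 : (2 * Real.pi * β ^ ((1:ℝ) - φ)) ≠ 0 := by positivity
    field_simp
end
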